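/- arXiv:1711.00806 — 3 statements merged into one kernel-verified Lean document; each statement's English description precedes it below -/
import Mathlib

section
/- Let Λ be a nontrivial discrete additive subgroup of ℂ that is invariant under complex conjugation. If Λ has rank 1, then Λ = ⟨a⟩_ℤ or Λ = ⟨ia⟩_ℤ for some real a ≠ 0. If Λ has rank 2, then Λ contains a finite-index subgroup of the form ⟨a, bi⟩_ℤ for some real a, b ≠ 0. -/
open Complex

noncomputable section

/-- The Weierstrass ℘-function of a subgroup `Λ` of `ℂ`:
`℘_Λ(u) = 1/u² + Σ_{ω ∈ Λ\{0}} (1/(u−ω)² − 1/ω²)`. -/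
noncomputable def wp (Λ : AddSubgroup ℂ) (u : ℂ) : ℂ :=
  1 / u ^ 2 + ∑' ω : {ω : ℂ // ω ∈ Λ ∧ ω ≠ 0}, (1 / (u - ω.1) ^ 2 - 1 / ω.1 ^ 2)

/-- A lattice of `ℂ`: the ℤ-span of two ℝ-linearly independent complex numbers. -/
def IsLattice (Λ : AddSubgroup ℂ) : Prop :=
  ∃ ω₁ ω₂ : ℂ, LinearIndependent ℝ ![ω₁, ω₂] ∧ Λ = AddSubgroup.closure {ω₁, ω₂}

/-- The complex conjugate subgroup. -/
noncomputable def conjL (Λ : AddSubgroup ℂ) : AddSubgroup ℂ :=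
  Λ.map (starRingEnd ℂ).toAddMonoidHom

/-- The subgroup `aΛ = {a·λ : λ ∈ Λ}`. -/
noncomputable def smulL (a : ℂ) (Λ : AddSubgroup ℂ) : AddSubgroup ℂ :=
  Λ.map (AddMonoidHom.mulLeft a)

/-- The Weierstrass σ-function of `Λ`. -/
noncomputable def wsigma (Λ : AddSubgroup ℂ) (u : ℂ) : ℂ :=
  u * ∏' ω : {ω : ℂ // ω ∈ Λ ∧ ω ≠ 0},
    ((1 - u / ω.1) * Complex.exp (u / ω.1 + u ^ 2 / (2 * ω.1 ^ 2)))

/-- The Weierstrass ζ-function of `Λ`, i.e. `σ_Λ'/σ_Λ`. -/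
noncomputable def wzeta (Λ : AddSubgroup ℂ) (u : ℂ) : ℂ :=
  deriv (wsigma Λ) u / wsigma Λ u

/-- A discrete subgroup of `ℂ`: every point is isolated. -/
def IsDiscreteSub (Λ : AddSubgroup ℂ) : Prop :=
  ∀ x ∈ Λ, ∃ ε > 0, ∀ y ∈ Λ, ‖y - x‖ < ε → y = x


lemma disc_top (Λ : AddSubgroup ℂ) (h : IsDiscreteSub Λ) : DiscreteTopology ↥Λ := by
  rw [discreteTopology_iff_isOpen_singleton]
  rintro ⟨x, hx⟩
  obtain ⟨ε, hε, hsep⟩ := h x hx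
  have : {(⟨x, hx⟩ : ↥Λ)} = (Subtype.val : ↥Λ → ℂ) ⁻¹' Metric.ball x ε := by
    ext ⟨y, hy⟩
    simp only [Set.mem_singleton_iff, Set.mem_preimage, Metric.mem_ball, Subtype.mk.injEq]
    constructor
    · rintro rfl; simpa using hε
    · intro hlt
      exact hsep y hy (by simpa [Complex.dist_eq] using hlt)
  rw [this]
  exact Metric.isOpen_ball.preimage continuous_subtype_val

lemma fin_mod (Λ : AddSubgroup ℂ) (h : IsDiscreteSub Λ) : Module.Finite ℤ ↥Λ := by
  have : DiscreteTopology ↥(AddSubgroup.toIntSubmodule Λ) := disc_top Λ h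
  exact instModuleFinite_of_discrete_submodule (AddSubgroup.toIntSubmodule Λ)

lemma line_cyclic (Λ : AddSubgroup ℂ) (hdisc : IsDiscreteSub Λ) (ω : ℂ) (hω : ω ≠ 0)
    (hline : ∀ x ∈ Λ, ∃ t : ℝ, t • ω = x) :
    ∃ g : ℂ, g ∈ Λ ∧ Λ = AddSubgroup.closure {g} := by
  set f : ℝ →+ ℂ := AddMonoidHom.mk' (fun t => t • ω) (fun a b => by simp [add_smul])
  set S : AddSubgroup ℝ := Λ.comap f with hS
  rcases AddSubgroup.dense_or_cyclic S with hd | ⟨t₀, ht₀⟩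
  · exfalso
    obtain ⟨ε, hε, hsep⟩ := hdisc 0 Λ.zero_mem
    have habsω : 0 < ‖ω‖ := norm_pos_iff.mpr hω
    set δ : ℝ := ε / ‖ω‖ with hδ
    have hδpos : 0 < δ := div_pos hε habsω
    obtain ⟨t, htS, htI⟩ := hd.exists_mem_open isOpen_Ioo
      (Set.nonempty_Ioo.mpr (by linarith : δ/2 < δ))
    have htΛ : t • ω ∈ Λ := htS
    have habs : ‖t • ω - 0‖ < ε := by
      rw [sub_zero, Complex.real_smul, norm_mul, Complex.norm_real, Real.norm_eq_abs]
      rw [abs_of_pos (by linarith [htI.1] : 0 < t)]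
      calc t * ‖ω‖ < δ * ‖ω‖ := by
              apply mul_lt_mul_of_pos_right htI.2 habsω
        _ = ε := by rw [hδ, div_mul_cancel₀ ε habsω.ne']
    have := hsep _ htΛ habs
    have ht0 : t ≠ 0 := by linarith [htI.1]
    exact hω (by simpa [smul_eq_zero, ht0] using this)
  · refine ⟨t₀ • ω, ?_, ?_⟩
    · have : t₀ ∈ S := ht₀ ▸ AddSubgroup.mem_closure_singleton.mpr ⟨1, one_smul _ _⟩
      exact this
    · ext x
      constructor
      · intro hx
        obtain ⟨t, ht⟩ := hline x hx
        have htS : t ∈ S := by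
          show f t ∈ Λ
          simp only [f, AddMonoidHom.mk'_apply]
          rw [ht]; exact hx
        rw [ht₀, AddSubgroup.mem_closure_singleton] at htS
        obtain ⟨n, hn⟩ := htS
        rw [AddSubgroup.mem_closure_singleton]
        refine ⟨n, ?_⟩
        rw [← ht, ← hn]
        push_cast [Complex.real_smul, zsmul_eq_mul]
        ring
      · intro hx
        rw [AddSubgroup.mem_closure_singleton] at hx
        obtain ⟨n, hn⟩ := hx
        have : t₀ • ω ∈ Λ := by
          have ht₀S : t₀ ∈ S := by
            rw [ht₀]; exact AddSubgroup.mem_closure_singleton.mpr ⟨1, one_zsmul _⟩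
          exact ht₀S
        exact hn ▸ AddSubgroup.zsmul_mem Λ this n

lemma rank_le_one_of_cyclic (Λ : AddSubgroup ℂ) (g : ℂ) (hg : g ∈ Λ)
    (h : Λ = AddSubgroup.closure {g}) : Module.rank ℤ ↥Λ ≤ 1 := by
  have hsurj : Function.Surjective (LinearMap.toSpanSingleton ℤ ↥Λ ⟨g, hg⟩) := by
    rintro ⟨x, hx⟩
    rw [h, AddSubgroup.mem_closure_singleton] at hx
    obtain ⟨n, hn⟩ := hx
    exact ⟨n, by ext; simpa [LinearMap.toSpanSingleton_apply] using hn⟩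
  calc Module.rank ℤ ↥Λ ≤ Module.rank ℤ ℤ :=
        LinearMap.rank_le_of_surjective _ hsurj
    _ = 1 := Module.rank_self ℤ


lemma dep3 (Λ : AddSubgroup ℂ) (hr : Module.rank ℤ ↥Λ = 2) (v : Fin 3 → ↥Λ) :
    ¬ LinearIndependent ℤ v := by
  intro h
  have := h.cardinal_le_rank
  rw [hr, Cardinal.mk_fin] at this
  norm_num at this

lemma cyclic_not_rank2 (Λ : AddSubgroup ℂ) (g : ℂ) (hg : g ∈ Λ)
    (h : Λ = AddSubgroup.closure {g}) (hr : Module.rank ℤ ↥Λ = 2) : False := by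
  have := rank_le_one_of_cyclic Λ g hg h
  rw [hr] at this
  norm_num at this

/-- a nontrivial discrete conjugation-invariant subgroup of `ℂ` of rank 1 is
`⟨a⟩_ℤ` or `⟨ia⟩_ℤ` for some real `a ≠ 0`; if it has rank 2 it contains a finite index
subgroup of the form `⟨a, bi⟩_ℤ` with `a, b` nonzero reals. -/
theorem invariant_discrete_structure (Λ : AddSubgroup ℂ) (hnt : Λ ≠ ⊥)
    (hdisc : IsDiscreteSub Λ) (hinv : ∀ z ∈ Λ, (starRingEnd ℂ) z ∈ Λ) :
    (Module.rank ℤ ↥Λ = 1 →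
      ∃ a : ℝ, a ≠ 0 ∧
        (Λ = AddSubgroup.closure {(a : ℂ)} ∨
         Λ = AddSubgroup.closure {(a : ℂ) * Complex.I})) ∧
    (Module.rank ℤ ↥Λ = 2 →
      ∃ a b : ℝ, a ≠ 0 ∧ b ≠ 0 ∧
        ∃ Λ' : AddSubgroup ℂ,
          Λ' = AddSubgroup.closure {(a : ℂ), (b : ℂ) * Complex.I} ∧ Λ' ≤ Λ ∧
          (Λ'.addSubgroupOf Λ).index ≠ 0) := by
  obtain ⟨ω, hωΛ, hω⟩ : ∃ x ∈ Λ, x ≠ 0 := by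
    by_contra h
    push_neg at h
    exact hnt ((AddSubgroup.eq_bot_iff_forall Λ).mpr h)
  constructor
  · -- rank 1
    intro hr
    have hline : ∀ x ∈ Λ, ∃ t : ℝ, t • ω = x := by
      intro x hx
      have hdep : ¬ LinearIndependent ℤ ![(⟨x, hx⟩ : ↥Λ), ⟨ω, hωΛ⟩] := by
        intro h
        have := h.cardinal_le_rank
        rw [hr, Cardinal.mk_fin] at this
        norm_num at this
      rw [LinearIndependent.pair_iff] at hdep
      push_neg at hdep
      obtain ⟨s, t, heq, hst⟩ := hdep
      have heqC : (s : ℂ) * x + (t : ℂ) * ω = 0 := by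
        have := congrArg (Subtype.val : ↥Λ → ℂ) heq
        push_cast at this
        simpa [zsmul_eq_mul] using this
      have hs : s ≠ 0 := by
        rintro rfl
        simp only [Int.cast_zero, zero_mul, zero_add, mul_eq_zero] at heqC
        rcases heqC with h1 | h1
        · exact hst rfl (by exact_mod_cast h1)
        · exact hω h1
      refine ⟨-(t : ℝ) / (s : ℝ), ?_⟩
      have hsC : (s : ℂ) ≠ 0 := by exact_mod_cast hs
      rw [Complex.real_smul]
      push_cast
      field_simp
      linear_combination -heqC
    obtain ⟨g, hgΛ, hgc⟩ := line_cyclic Λ hdisc ω hω hline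
    have hg0 : g ≠ 0 := by
      rintro rfl
      exact hnt (by simpa [AddSubgroup.closure_singleton_zero] using hgc)
    obtain ⟨n, hn⟩ := AddSubgroup.mem_closure_singleton.mp (hgc ▸ hinv g hgΛ)
    have hnn : (n * n) • g = g := by
      have h2 := congrArg (starRingEnd ℂ) hn
      rw [map_zsmul, Complex.conj_conj] at h2
      calc (n*n) • g = n • (n • g) := mul_zsmul g n n
        _ = n • (starRingEnd ℂ) g := by rw [hn]
        _ = g := h2
    have hn2 : n * n = 1 := by
      have : ((n * n : ℤ) - 1 : ℂ) * g = 0 := by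
        push_cast
        rw [sub_mul, one_mul, sub_eq_zero]
        simpa [zsmul_eq_mul] using hnn
      rcases mul_eq_zero.mp this with h1 | h1
      · have : ((n*n : ℤ) : ℂ) = 1 := by linear_combination h1
        exact_mod_cast this
      · exact absurd h1 hg0
    rcases Int.isUnit_iff.mp (IsUnit.of_mul_eq_one _ hn2) with h1 | h1
    · -- n = 1 : g is real
      subst h1
      rw [one_zsmul] at hn
      have hre : ((g.re : ℝ) : ℂ) = g := Complex.conj_eq_iff_re.mp hn.symm
      refine ⟨g.re, ?_, Or.inl ?_⟩
      · intro h0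
        apply hg0
        rw [← hre, h0, Complex.ofReal_zero]
      · rw [hgc, hre]
    · -- n = -1 : g is purely imaginary
      subst h1
      have hng : (starRingEnd ℂ) g = -g := by rw [← hn]; simp
      have hre0 : g.re = 0 := by
        have := congrArg Complex.re hng
        simp at this
        linarith
      have him : ((g.im : ℝ) : ℂ) * Complex.I = g := by
        apply Complex.ext <;> simp [hre0]
      refine ⟨g.im, ?_, Or.inr ?_⟩
      · intro h0
        apply hg0
        rw [← him, h0]
        simp
      · rw [hgc, him]
  · -- rank 2
    intro hr
    have hfin : Module.Finite ℤ ↥Λ := fin_mod Λ hdisc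
    -- there is an element with nonzero real part
    obtain ⟨z, hzΛ, hzre⟩ : ∃ z ∈ Λ, z.re ≠ 0 := by
      by_contra h
      push_neg at h
      have hline : ∀ x ∈ Λ, ∃ t : ℝ, t • Complex.I = x := by
        intro x hx
        refine ⟨x.im, ?_⟩
        apply Complex.ext <;> simp [h x hx]
      obtain ⟨g, hgΛ, hgc⟩ := line_cyclic Λ hdisc Complex.I Complex.I_ne_zero hline
      exact cyclic_not_rank2 Λ g hgΛ hgc hr
    obtain ⟨w, hwΛ, hwim⟩ : ∃ w ∈ Λ, w.im ≠ 0 := by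
      by_contra h
      push_neg at h
      have hline : ∀ x ∈ Λ, ∃ t : ℝ, t • (1 : ℂ) = x := by
        intro x hx
        refine ⟨x.re, ?_⟩
        apply Complex.ext <;> simp [h x hx]
      obtain ⟨g, hgΛ, hgc⟩ := line_cyclic Λ hdisc 1 one_ne_zero hline
      exact cyclic_not_rank2 Λ g hgΛ hgc hr
    set a : ℝ := 2 * z.re with ha
    set b : ℝ := 2 * w.im with hb
    have ha0 : a ≠ 0 := by simp [ha, hzre]
    have hb0 : b ≠ 0 := by simp [hb, hwim]
    have haΛ : ((a : ℝ) : ℂ) ∈ Λ := by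
      have : ((a : ℝ) : ℂ) = z + (starRingEnd ℂ) z := by
        rw [Complex.add_conj, ha]
      rw [this]
      exact Λ.add_mem hzΛ (hinv z hzΛ)
    have hbΛ : ((b : ℝ) : ℂ) * Complex.I ∈ Λ := by
      have : ((b : ℝ) : ℂ) * Complex.I = w - (starRingEnd ℂ) w := by
        rw [Complex.sub_conj, hb]
      rw [this]
      exact Λ.sub_mem hwΛ (hinv w hwΛ)
    set Λ' : AddSubgroup ℂ := AddSubgroup.closure {((a : ℝ) : ℂ), ((b : ℝ) : ℂ) * Complex.I}
      with hΛ'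
    have hle : Λ' ≤ Λ := by
      rw [hΛ']
      apply (AddSubgroup.closure_le Λ).mpr
      rintro x (rfl | rfl)
      · exact haΛ
      · exact hbΛ
    refine ⟨a, b, ha0, hb0, Λ', rfl, hle, ?_⟩
    -- quotient is finite
    have htor : ∀ x : ↥Λ, ∃ n : ℤ, n ≠ 0 ∧ n • (x : ℂ) ∈ Λ' := by
      intro x
      have hdep := dep3 Λ hr ![⟨_, haΛ⟩, ⟨_, hbΛ⟩, x]
      rw [Fintype.not_linearIndependent_iff] at hdep
      obtain ⟨c, hc, i, hi⟩ := hdep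
      have hsum : (c 0 : ℂ) * (a : ℂ) + (c 1 : ℂ) * ((b : ℂ) * Complex.I)
          + (c 2 : ℂ) * (x : ℂ) = 0 := by
        have := congrArg (Subtype.val : ↥Λ → ℂ) hc
        rw [Fin.sum_univ_three] at this
        push_cast at this
        simpa [zsmul_eq_mul] using this
      have hc2 : c 2 ≠ 0 := by
        intro h2
        rw [h2] at hsum
        simp only [Int.cast_zero, zero_mul, add_zero] at hsum
        have hre := congrArg Complex.re hsum
        have him := congrArg Complex.im hsum
        simp at hre him
        have hc0 : c 0 = 0 := by
          rcases hre with h | h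
          · exact_mod_cast h
          · exact absurd h ha0
        have hc1 : c 1 = 0 := by
          rcases him with h | h
          · exact_mod_cast h
          · exact absurd h hb0
        fin_cases i <;> simp_all
      refine ⟨c 2, hc2, ?_⟩
      have : (c 2 : ℂ) * (x : ℂ) =
          (-(c 0)) • ((a : ℂ)) + (-(c 1)) • (((b : ℂ)) * Complex.I) := by
        simp only [zsmul_eq_mul]
        push_cast
        linear_combination hsum
      rw [zsmul_eq_mul, this]
      apply Λ'.add_mem
      · exact Λ'.zsmul_mem (AddSubgroup.subset_closure (Set.mem_insert _ _)) _
      · exact Λ'.zsmul_mem (AddSubgroup.subset_closure (Set.mem_insert_of_mem _ rfl)) _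
    have hfinQ : Finite (↥Λ ⧸ (Λ'.addSubgroupOf Λ)) := by
      have hfg : AddGroup.FG ↥Λ := Module.Finite.iff_addGroup_fg.mp hfin
      have hfgQ : AddGroup.FG (↥Λ ⧸ (Λ'.addSubgroupOf Λ)) :=
        AddGroup.fg_of_surjective (QuotientAddGroup.mk'_surjective _)
      apply AddCommGroup.finite_of_fg_torsion
      intro q
      obtain ⟨x, rfl⟩ := QuotientAddGroup.mk'_surjective (Λ'.addSubgroupOf Λ) q
      obtain ⟨n, hn0, hn⟩ := htor x
      rw [isOfFinAddOrder_iff_zsmul_eq_zero]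
      refine ⟨n, hn0, ?_⟩
      rw [← map_zsmul]
      rw [QuotientAddGroup.mk'_apply, QuotientAddGroup.eq_zero_iff]
      exact hn
    exact AddSubgroup.index_ne_zero_of_finite
end
end

section
/- Let Ω₁ be a sublattice of index n of a lattice Ω₂ in ℂ, and write Ω₂ = ⋃_{i=1}^n (Ω₁ + a_i) as a union of cosets. Then there exists a constant 𝔠 ∈ ℂ such that ℘_{Ω₂}(u) = Σ_{i=1}^n ℘_{Ω₁}(u + a_i) − 𝔠 for all u where both sides are defined. -/
open Complex

noncomputable section

theorem IsLattice.param {Λ : AddSubgroup ℂ} (h : IsLattice Λ) :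
    ∃ (e : (Fin 2 → ℤ) → ℂ) (C : ℝ), 0 < C ∧ e 0 = 0 ∧ Function.Injective e ∧
      (∀ x : ℂ, x ∈ Λ ↔ ∃ p, e p = x) ∧ ∀ p, C * ‖p‖ ≤ ‖e p‖ := by
  obtain ⟨ω₁, ω₂, hli, hΛ⟩ := h
  set T : (Fin 2 → ℝ) →ₗ[ℝ] ℂ :=
    ((LinearMap.proj 0 : (Fin 2 → ℝ) →ₗ[ℝ] ℝ).smulRight ω₁) +
      ((LinearMap.proj 1 : (Fin 2 → ℝ) →ₗ[ℝ] ℝ).smulRight ω₂) with hT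
  have hTapp : ∀ v : Fin 2 → ℝ, T v = v 0 • ω₁ + v 1 • ω₂ := fun v => rfl
  have hTinj : Function.Injective T := by
    rw [← LinearMap.ker_eq_bot, LinearMap.ker_eq_bot']
    intro v hv
    have := (Fintype.linearIndependent_iff.mp hli) v ?_
    · funext i; fin_cases i <;> simp [this 0, this 1]
    · rw [Fin.sum_univ_two]
      simpa [hTapp] using hv
  have hdim : Module.finrank ℝ (Fin 2 → ℝ) = Module.finrank ℝ ℂ := by
    simp [Complex.finrank_real_complex]
  set L := (T.linearEquivOfInjective hTinj hdim).toContinuousLinearEquiv with hL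
  obtain ⟨K, hK⟩ : ∃ K : NNReal, AntilipschitzWith K L := ⟨_, L.antilipschitz⟩
  set e : (Fin 2 → ℤ) → ℂ := fun p => T (fun i => (p i : ℝ)) with he
  have hnorm : ∀ p : Fin 2 → ℤ, ‖(fun i => (p i : ℝ) : Fin 2 → ℝ)‖ = ‖p‖ := by
    intro p
    have h4 : ∀ i, ‖((p i : ℝ))‖₊ = ‖p i‖₊ := fun i => by
      ext; exact Int.norm_cast_real (p i)
    simp [Pi.norm_def, h4]
  refine ⟨e, ((K : ℝ) + 1)⁻¹, by positivity, by simp [he, hTapp], ?_, ?_, ?_⟩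
  · intro p q hpq
    have := hTinj hpq
    funext i
    exact_mod_cast congrFun this i
  · intro x
    rw [hΛ, AddSubgroup.mem_closure_pair]
    constructor
    · rintro ⟨m, n, rfl⟩
      refine ⟨![m, n], ?_⟩
      rw [he]; show T _ = _
      rw [hTapp]
      push_cast
      simp [zsmul_eq_mul, Complex.real_smul]
    · rintro ⟨p, rfl⟩
      refine ⟨p 0, p 1, ?_⟩
      rw [he]; show _ = T _
      rw [hTapp]
      push_cast
      simp [zsmul_eq_mul, Complex.real_smul]
  · intro p
    have h1 : ‖(fun i => (p i : ℝ) : Fin 2 → ℝ)‖ ≤ K * ‖e p‖ := by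
      have h2 := hK.le_mul_norm (map_zero L) (fun i => (p i : ℝ))
      have h3 : L (fun i => (p i : ℝ)) = e p := by
        rw [hL, he]
        simp [LinearEquiv.coe_toContinuousLinearEquiv, LinearMap.linearEquivOfInjective_apply]
      rwa [h3] at h2
    rw [hnorm p] at h1
    rw [inv_mul_le_iff₀ (by positivity)]
    calc ‖p‖ ≤ K * ‖e p‖ := h1
      _ ≤ _ := by nlinarith [norm_nonneg (e p)]

theorem IsLattice.finite_norm_le {Λ : AddSubgroup ℂ} (h : IsLattice Λ) (R : ℝ) :
    {x : ℂ | x ∈ Λ ∧ ‖x‖ ≤ R}.Finite := by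
  obtain ⟨e, C, hC, he0, hinj, hmem, hlow⟩ := h.param
  have hsub : {x : ℂ | x ∈ Λ ∧ ‖x‖ ≤ R} ⊆ e '' {p | ‖p‖ ≤ R / C} := by
    rintro x ⟨hx, hxR⟩
    obtain ⟨p, rfl⟩ := (hmem x).mp hx
    refine ⟨p, ?_, rfl⟩
    rw [Set.mem_setOf_eq, le_div_iff₀ hC, mul_comm]
    exact le_trans (hlow p) hxR
  refine Set.Finite.subset (Set.Finite.image e ?_) hsub
  have : {p : Fin 2 → ℤ | ‖p‖ ≤ R / C} ⊆
      Set.Icc (fun _ => -⌈R / C⌉) (fun _ => ⌈R / C⌉) := by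
    intro p hp
    have hpi : ∀ i, |(p i : ℝ)| ≤ R / C := fun i => by
      have := norm_le_pi_norm p i
      rw [Int.norm_eq_abs] at this
      exact le_trans this hp
    constructor <;> intro i <;> have := hpi i <;> rw [abs_le] at this
    · have h1 : -((⌈R / C⌉ : ℝ)) ≤ (p i : ℝ) := le_trans (neg_le_neg (Int.le_ceil _)) this.1
      exact_mod_cast h1
    · exact_mod_cast le_trans this.2 (Int.le_ceil _)
  exact (Set.finite_Icc _ _).subset this

theorem IsLattice.summable_rpow {Λ : AddSubgroup ℂ} (h : IsLattice Λ) :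
    Summable (fun ω : {x : ℂ // x ∈ Λ} => ‖(ω : ℂ)‖ ^ (-(3 : ℝ))) := by
  obtain ⟨e, C, hC, he0, hinj, hmem, hlow⟩ := h.param
  have hι_spec : ∀ ω : {x : ℂ // x ∈ Λ}, e ((hmem ω.1).mp ω.2).choose = (ω : ℂ) :=
    fun ω => ((hmem ω.1).mp ω.2).choose_spec
  set ι : {x : ℂ // x ∈ Λ} → (Fin 2 → ℤ) := fun ω => ((hmem ω.1).mp ω.2).choose with hι
  have hι_inj : Function.Injective ι := by
    intro x y hxy
    apply Subtype.ext
    rw [← hι_spec x, ← hι_spec y]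
    simp only [hι] at hxy
    rw [hxy]
  have hsum : Summable (fun p : Fin 2 → ℤ => C ^ (-(3:ℝ)) * ‖p‖ ^ (-(3:ℝ))) :=
    (EisensteinSeries.summable_one_div_norm_rpow (by norm_num)).mul_left _
  refine Summable.of_nonneg_of_le (fun ω => Real.rpow_nonneg (norm_nonneg _) _) ?_
    (hsum.comp_injective hι_inj)
  intro ω
  show ‖(ω : ℂ)‖ ^ (-(3:ℝ)) ≤ C ^ (-(3:ℝ)) * ‖ι ω‖ ^ (-(3:ℝ))
  by_cases h0 : (ω : ℂ) = 0
  · rw [h0, norm_zero, Real.zero_rpow (by norm_num)]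
    positivity
  · have hp0 : ι ω ≠ 0 := by
      intro hh
      exact h0 (by rw [← hι_spec ω]; show e (ι ω) = 0; rw [hh, he0])
    have hpnorm : (0:ℝ) < ‖ι ω‖ := norm_pos_iff.mpr hp0
    have hlow' : C * ‖ι ω‖ ≤ ‖(ω : ℂ)‖ := by
      have := hlow (ι ω)
      rwa [show e (ι ω) = (ω : ℂ) from hι_spec ω] at this
    calc ‖(ω : ℂ)‖ ^ (-(3:ℝ)) ≤ (C * ‖ι ω‖) ^ (-(3:ℝ)) :=
          Real.rpow_le_rpow_of_nonpos (by positivity) hlow' (by norm_num)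
      _ = C ^ (-(3:ℝ)) * ‖ι ω‖ ^ (-(3:ℝ)) := Real.mul_rpow hC.le hpnorm.le

theorem IsLattice.summable_of_bound {Λ : AddSubgroup ℂ} (h : IsLattice Λ) (f : ℂ → ℂ)
    (K R : ℝ) (hsupp : ∀ x, f x ≠ 0 → x ∈ Λ)
    (hb : ∀ x, x ∈ Λ → R ≤ ‖x‖ → ‖f x‖ ≤ K * ‖x‖ ^ (-(3 : ℝ))) : Summable f := by
  have hind : (↑Λ : Set ℂ).indicator f = f :=
    Set.indicator_eq_self.mpr (fun x hx => hsupp x hx)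
  rw [← hind, ← summable_subtype_iff_indicator]
  refine Summable.of_norm_bounded_eventually
    (g := fun ω : {x : ℂ // x ∈ (↑Λ : Set ℂ)} => K * ‖(ω : ℂ)‖ ^ (-(3:ℝ)))
    (h.summable_rpow.mul_left K) ?_
  rw [Filter.eventually_cofinite]
  refine Set.Finite.subset ((h.finite_norm_le R).preimage
    (Set.injOn_of_injective Subtype.coe_injective)) ?_
  intro ω hω
  refine ⟨ω.2, ?_⟩
  by_contra hcon
  push_neg at hcon
  exact hω (hb ω ω.2 hcon.le)


theorem key_bound (v w x : ℂ) (W : ℝ) (hw : ‖w‖ ≤ W)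
    (hx : 2 * ‖v‖ + 2 * W + 1 ≤ ‖x‖) :
    ‖1 / (v - x) ^ 2 - 1 / (x + w) ^ 2‖ ≤ (48 * (‖v‖ + W + 1)) * ‖x‖ ^ (-(3 : ℝ)) := by
  have hW : 0 ≤ W := le_trans (norm_nonneg w) hw
  have hv : 0 ≤ ‖v‖ := norm_nonneg v
  have hx1 : 1 ≤ ‖x‖ := by linarith
  have hs : ‖x‖ / 2 ≤ ‖v - x‖ := by
    have h1 : ‖x‖ - ‖v‖ ≤ ‖x - v‖ := by
      have := norm_sub_norm_le x v
      linarith [this]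
    rw [norm_sub_rev] at h1
    linarith
  have ht : ‖x‖ / 2 ≤ ‖x + w‖ := by
    have h1 : ‖x‖ ≤ ‖x + w‖ + ‖w‖ := by
      calc ‖x‖ = ‖(x + w) - w‖ := by ring_nf
        _ ≤ ‖x + w‖ + ‖w‖ := norm_sub_le _ _
    linarith
  have hs0 : v - x ≠ 0 := by
    intro hh; rw [hh, norm_zero] at hs; linarith
  have ht0 : x + w ≠ 0 := by
    intro hh; rw [hh, norm_zero] at ht; linarith
  have hid : 1 / (v - x) ^ 2 - 1 / (x + w) ^ 2
      = ((v + w) * (2 * x + w - v)) / ((v - x) ^ 2 * (x + w) ^ 2) := by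
    field_simp
    ring
  rw [hid, norm_div, norm_mul, norm_mul, norm_pow, norm_pow]
  have hrpow : ‖x‖ ^ (-(3:ℝ)) = (‖x‖ ^ (3:ℕ))⁻¹ := by
    rw [← Real.rpow_natCast ‖x‖ 3, ← Real.rpow_neg (norm_nonneg x)]
    norm_num
  rw [hrpow]
  set a := ‖x‖ with ha
  have hN : ‖v + w‖ * ‖2 * x + w - v‖ ≤ (‖v‖ + W) * (3 * a) := by
    have h1 : ‖v + w‖ ≤ ‖v‖ + W := le_trans (norm_add_le _ _) (by linarith)
    have h2 : ‖2 * x + w - v‖ ≤ 3 * a := by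
      calc ‖2 * x + w - v‖ ≤ ‖2 * x + w‖ + ‖v‖ := norm_sub_le _ _
        _ ≤ ‖2 * x‖ + ‖w‖ + ‖v‖ := by linarith [norm_add_le (2*x) w]
        _ ≤ 2 * a + W + ‖v‖ := by
            simp only [norm_mul, Complex.norm_ofNat]
            linarith
        _ ≤ 3 * a := by linarith
    exact mul_le_mul h1 h2 (norm_nonneg _) (by linarith)
  have hD : a ^ 4 / 16 ≤ ‖v - x‖ ^ 2 * ‖x + w‖ ^ 2 := by
    have h1 : (a/2)^2 ≤ ‖v - x‖^2 := pow_le_pow_left₀ (by positivity) hs 2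
    have h2 : (a/2)^2 ≤ ‖x + w‖^2 := pow_le_pow_left₀ (by positivity) ht 2
    calc a^4/16 = (a/2)^2 * (a/2)^2 := by ring
      _ ≤ ‖v - x‖^2 * ‖x + w‖^2 := mul_le_mul h1 h2 (by positivity) (by positivity)
  have hstep : ‖v + w‖ * ‖2 * x + w - v‖ / (‖v - x‖ ^ 2 * ‖x + w‖ ^ 2)
      ≤ ((‖v‖ + W) * (3 * a)) / (a ^ 4 / 16) :=
    div_le_div₀ (by positivity) hN (by positivity) hD
  refine le_trans hstep ?_
  rw [div_le_iff₀ (by positivity)]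
  have heq : 48 * (‖v‖ + W + 1) * (a ^ 3)⁻¹ * (a ^ 4 / 16) = 3 * (‖v‖ + W + 1) * a := by
    field_simp
    ring
  rw [heq]
  nlinarith

noncomputable def gAux : ℂ → ℂ := fun x => if x = 0 then 0 else 1 / x ^ 2

theorem gAux_eq (x : ℂ) : gAux x = 1 / (0 - x) ^ 2 := by
  by_cases hx : x = 0
  · simp [gAux, hx]
  · simp only [gAux, if_neg hx]
    congr 1
    ring

theorem summ_aux {Λ : AddSubgroup ℂ} (h : IsLattice Λ) (s : Set ℂ) (hs : ∀ y ∈ s, y ∈ Λ)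
    (v : ℂ) (b : ℂ → ℂ) (W : ℝ) (hb : ∀ y, ‖b y‖ ≤ W) :
    Summable (Set.indicator s (fun y => 1 / (v - y) ^ 2 - gAux (y + b y))) := by
  have hW : 0 ≤ W := le_trans (norm_nonneg (b 0)) (hb 0)
  apply h.summable_of_bound _ (48 * (‖v‖ + W + 1)) (2 * ‖v‖ + 2 * W + 1)
  · intro x hx
    exact hs x (Set.mem_of_indicator_ne_zero hx)
  · intro x _ hR
    refine le_trans (norm_indicator_le_norm_self _ x) ?_
    have hx0 : x + b x ≠ 0 := by
      intro hh
      have h2 : ‖x‖ = ‖-(b x)‖ := congrArg Norm.norm (by linear_combination hh)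
      rw [norm_neg] at h2
      have := hb x
      rw [h2] at hR
      linarith [norm_nonneg v]
    have hgg : gAux (x + b x) = 1 / (x + b x) ^ 2 := if_neg hx0
    rw [hgg]
    exact key_bound v (b x) x W (hb x) hR

theorem wp_eq_tsum {Λ : AddSubgroup ℂ} (h : IsLattice Λ) (v : ℂ) :
    wp Λ v = ∑' x : ℂ, Set.indicator (↑Λ) (fun x => 1 / (v - x) ^ 2 - gAux x) x := by
  classical
  set S0 : Set ℂ := {x | x ∈ Λ ∧ x ≠ 0} with hS0
  have h1 : ∑' ω : {ω : ℂ // ω ∈ Λ ∧ ω ≠ 0}, (1 / (v - ω.1) ^ 2 - 1 / ω.1 ^ 2)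
      = ∑' x : ℂ, Set.indicator S0 (fun x => 1 / (v - x) ^ 2 - 1 / x ^ 2) x :=
    tsum_subtype S0 (fun x => 1 / (v - x) ^ 2 - 1 / x ^ 2)
  have hsum1 : Summable (Set.indicator S0 (fun x => 1 / (v - x) ^ 2 - 1 / x ^ 2)) := by
    have := summ_aux h S0 (fun y hy => hy.1) v (fun _ => 0) 0 (fun y => by simp)
    apply this.congr
    intro x
    by_cases hx : x ∈ S0
    · rw [Set.indicator_of_mem hx, Set.indicator_of_mem hx, add_zero,
        show gAux x = 1 / x ^ 2 from if_neg hx.2]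
    · rw [Set.indicator_of_notMem hx, Set.indicator_of_notMem hx]
  have hsum2 : Summable (Set.indicator ({0} : Set ℂ) (fun x => 1 / (v - x) ^ 2)) := by
    apply summable_of_finite_support
    exact Set.Finite.subset (Set.finite_singleton 0)
      (fun x hx => Set.mem_of_indicator_ne_zero hx)
  have hpt : ∀ x, Set.indicator (↑Λ) (fun x => 1 / (v - x) ^ 2 - gAux x) x
      = Set.indicator S0 (fun x => 1 / (v - x) ^ 2 - 1 / x ^ 2) x
        + Set.indicator ({0} : Set ℂ) (fun x => 1 / (v - x) ^ 2) x := by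
    intro x
    by_cases hx0 : x = 0
    · subst hx0
      rw [Set.indicator_of_mem (by exact_mod_cast Λ.zero_mem) _,
        Set.indicator_of_notMem (by simp [hS0]) _,
        Set.indicator_of_mem (Set.mem_singleton 0) _]
      simp [gAux]
    · by_cases hxΛ : x ∈ Λ
      · rw [Set.indicator_of_mem (by exact_mod_cast hxΛ) _,
          Set.indicator_of_mem (show x ∈ S0 from ⟨hxΛ, hx0⟩) _,
          Set.indicator_of_notMem (by simp [hx0]) _,
          show gAux x = 1 / x ^ 2 from if_neg hx0]
        ring
      · rw [Set.indicator_of_notMem (by exact_mod_cast hxΛ) _,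
          Set.indicator_of_notMem (fun hc => hxΛ hc.1) _,
          Set.indicator_of_notMem (by simp [hx0]) _]
        ring
  rw [wp, h1, tsum_congr hpt, hsum1.tsum_add hsum2]
  have h2 : ∑' x : ℂ, Set.indicator ({0} : Set ℂ) (fun x => 1 / (v - x) ^ 2) x
      = 1 / v ^ 2 := by
    rw [tsum_eq_single (0 : ℂ) (fun b hb => Set.indicator_of_notMem (by simp [hb]) _)]
    rw [Set.indicator_of_mem (Set.mem_singleton 0) _]
    simp
  rw [h2]
  ring

/-- if `Ω₁ ≤ Ω₂` are lattices with coset representatives `a₁,…,aₙ`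
(`Ω₂ = ⋃ᵢ (Ω₁ + aᵢ)`, the cosets being pairwise distinct, so `[Ω₂ : Ω₁] = n`), then there is
a constant `𝔠` with `℘_{Ω₂}(u) = Σᵢ ℘_{Ω₁}(u + aᵢ) − 𝔠` wherever defined. -/
theorem wp_cosets (Ω₁ Ω₂ : AddSubgroup ℂ) (h₁ : IsLattice Ω₁) (h₂ : IsLattice Ω₂)
    (hle : Ω₁ ≤ Ω₂) (n : ℕ) (hn : 0 < n) (a : Fin n → ℂ)
    (hinj : ∀ i j : Fin n, a i - a j ∈ Ω₁ → i = j)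
    (hcover : ∀ x : ℂ, x ∈ Ω₂ ↔ ∃ i : Fin n, x - a i ∈ Ω₁) :
    ∃ c : ℂ, ∀ u : ℂ, u ∉ Ω₂ →
      wp Ω₂ u = (∑ i : Fin n, wp Ω₁ (u + a i)) - c := by
  classical
  -- basic coset facts
  have hmem2 : ∀ y : ℂ, y ∈ Ω₂ ↔ ∃ i, y + a i ∈ Ω₁ := by
    intro y
    rw [show y ∈ Ω₂ ↔ -y ∈ Ω₂ from (neg_mem_iff).symm, hcover (-y)]
    constructor
    · rintro ⟨i, hi⟩
      exact ⟨i, by rwa [show y + a i = -(-y - a i) by ring, neg_mem_iff]⟩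
    · rintro ⟨i, hi⟩
      exact ⟨i, by rwa [show -y - a i = -(y + a i) by ring, neg_mem_iff]⟩
  have huniq : ∀ (y : ℂ) (i j : Fin n), y + a i ∈ Ω₁ → y + a j ∈ Ω₁ → i = j := by
    intro y i j hi hj
    exact hinj i j (by have := sub_mem hi hj; simpa using this)
  -- the index of the coset of `y`
  set ix : ℂ → Fin n := fun y =>
    if h : ∃ i, y + a i ∈ Ω₁ then h.choose else ⟨0, hn⟩ with hix
  have hix_spec : ∀ y : ℂ, y ∈ Ω₂ → y + a (ix y) ∈ Ω₁ := by
    intro y hy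
    have hex : ∃ i, y + a i ∈ Ω₁ := (hmem2 y).mp hy
    simp only [hix, dif_pos hex]
    exact hex.choose_spec
  -- norm bound on the `a i`
  set W : ℝ := ∑ i, ‖a i‖ with hW
  have hWa : ∀ i, ‖a i‖ ≤ W := fun i =>
    Finset.single_le_sum (fun j _ => norm_nonneg (a j)) (Finset.mem_univ i)
  have hW0 : (0 : ℝ) ≤ W := Finset.sum_nonneg (fun j _ => norm_nonneg (a j))
  -- the constant
  set d : ℂ → ℂ :=
    Set.indicator (↑Ω₂) (fun y => gAux (y + a (ix y)) - gAux y) with hd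
  have hd_summ : Summable d := by
    have hbase := summ_aux h₂ (↑Ω₂) (fun y hy => hy) 0 (fun y => a (ix y)) W
      (fun y => hWa (ix y))
    have : d = fun y => -(Set.indicator (↑Ω₂)
        (fun y => 1 / ((0 : ℂ) - y) ^ 2 - gAux (y + a (ix y))) y) := by
      funext y
      by_cases hy : y ∈ (↑Ω₂ : Set ℂ)
      · rw [hd, Set.indicator_of_mem hy, Set.indicator_of_mem hy, ← gAux_eq y]
        ring
      · rw [hd, Set.indicator_of_notMem hy, Set.indicator_of_notMem hy, neg_zero]
    rw [this]
    exact hbase.neg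
  refine ⟨-∑' y : ℂ, d y, ?_⟩
  intro u _
  -- the three indicator functions
  set q : ℂ → ℂ :=
    Set.indicator (↑Ω₂) (fun y => 1 / (u - y) ^ 2 - gAux (y + a (ix y))) with hq
  have hq_summ : Summable q :=
    summ_aux h₂ (↑Ω₂) (fun y hy => hy) u (fun y => a (ix y)) W (fun y => hWa (ix y))
  set f : Fin n → ℂ → ℂ := fun i =>
    Set.indicator {y : ℂ | y + a i ∈ Ω₁} (fun y => 1 / (u - y) ^ 2 - gAux (y + a i))
    with hf
  have hf_summ : ∀ i, Summable (f i) := fun i =>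
    summ_aux h₂ {y : ℂ | y + a i ∈ Ω₁} (fun y hy => (hmem2 y).mpr ⟨i, hy⟩) u
      (fun _ => a i) W (fun _ => hWa i)
  -- Step A for Ω₂
  have hA : wp Ω₂ u = ∑' y : ℂ,
      Set.indicator (↑Ω₂) (fun y => 1 / (u - y) ^ 2 - gAux y) y := wp_eq_tsum h₂ u
  -- Step B : each translated ℘
  have hB : ∀ i, wp Ω₁ (u + a i) = ∑' y : ℂ, f i y := by
    intro i
    rw [wp_eq_tsum h₁ (u + a i), ← (Equiv.addRight (a i)).tsum_eq]
    apply tsum_congr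
    intro y
    simp only [Equiv.coe_addRight]
    by_cases hy : y + a i ∈ Ω₁
    · rw [hf]
      beta_reduce
      rw [Set.indicator_of_mem (show y + a i ∈ (↑Ω₁ : Set ℂ) from hy),
        Set.indicator_of_mem (show y ∈ {y : ℂ | y + a i ∈ Ω₁} from hy),
        show u + a i - (y + a i) = u - y by ring]
    · rw [hf]
      beta_reduce
      rw [Set.indicator_of_notMem (show y + a i ∉ (↑Ω₁ : Set ℂ) from hy),
        Set.indicator_of_notMem (show y ∉ {y : ℂ | y + a i ∈ Ω₁} from hy)]
  -- Step D : pointwise sum over cosets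
  have hD : ∀ y : ℂ, ∑ i, f i y = q y := by
    intro y
    by_cases hy : y ∈ Ω₂
    · have h0 : y + a (ix y) ∈ Ω₁ := hix_spec y hy
      rw [Finset.sum_eq_single (ix y)]
      · rw [hf, hq]
        beta_reduce
        rw [Set.indicator_of_mem (show y ∈ {z : ℂ | z + a (ix y) ∈ Ω₁} from h0),
          Set.indicator_of_mem (show y ∈ (↑Ω₂ : Set ℂ) from hy)]
      · intro j _ hji
        apply Set.indicator_of_notMem
        intro hj
        exact hji (huniq y j (ix y) hj h0)
      · intro hcon
        exact absurd (Finset.mem_univ (ix y)) hcon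
    · have hnone : ∀ i, y + a i ∉ Ω₁ := fun i hi => hy ((hmem2 y).mpr ⟨i, hi⟩)
      rw [hq, Set.indicator_of_notMem (show y ∉ (↑Ω₂ : Set ℂ) from hy)]
      exact Finset.sum_eq_zero fun i _ =>
        Set.indicator_of_notMem (show y ∉ {y : ℂ | y + a i ∈ Ω₁} from hnone i) _
  -- pointwise decomposition
  have hpt : ∀ y : ℂ, Set.indicator (↑Ω₂) (fun y => 1 / (u - y) ^ 2 - gAux y) y
      = q y + d y := by
    intro y
    by_cases hy : y ∈ (↑Ω₂ : Set ℂ)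
    · rw [hq, hd, Set.indicator_of_mem hy, Set.indicator_of_mem hy,
        Set.indicator_of_mem hy]
      ring
    · rw [hq, hd, Set.indicator_of_notMem hy, Set.indicator_of_notMem hy,
        Set.indicator_of_notMem hy, add_zero]
  -- assemble
  calc wp Ω₂ u = ∑' y : ℂ, (q y + d y) := by rw [hA, tsum_congr hpt]
    _ = (∑' y : ℂ, q y) + ∑' y : ℂ, d y := hq_summ.tsum_add hd_summ
    _ = (∑' y : ℂ, ∑ i, f i y) + ∑' y : ℂ, d y := by
        rw [tsum_congr (fun y => (hD y).symm)]
    _ = (∑ i, ∑' y : ℂ, f i y) + ∑' y : ℂ, d y := by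
        rw [Summable.tsum_finsetSum (fun i _ => hf_summ i)]
    _ = (∑ i, wp Ω₁ (u + a i)) - -∑' y : ℂ, d y := by
        rw [Finset.sum_congr rfl (fun i _ => (hB i).symm)]
        ring
end
end

section
/- Let Ω and Ω' be lattices of ℂ possessing a common sublattice, both invariant under complex conjugation. Then the generalized residue 𝔠(Ω, Ω') := 𝔠(Ω, Ω'') − ([Ω:Ω'']/[Ω':Ω''])·𝔠(Ω', Ω''), computed with respect to any common sublattice Ω'', is a real number. -/
open Complex

noncomputable section

/-- `c` is the residue `𝔠(Ω₂, Ω₁)` of the sublattice `Ω₁ ≤ Ω₂`, of index `n`: the unique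
constant with `℘_{Ω₂}(u) = Σ_{i=1}^n ℘_{Ω₁}(u + aᵢ) − c` for (distinct) coset
representatives `a₁,…,aₙ` of `Ω₁` in `Ω₂`. -/
def IsResidueWith (Ω₂ Ω₁ : AddSubgroup ℂ) (n : ℕ) (c : ℂ) : Prop :=
  ∃ a : Fin n → ℂ,
    (∀ i j : Fin n, a i - a j ∈ Ω₁ → i = j) ∧
    (∀ x : ℂ, x ∈ Ω₂ ↔ ∃ i : Fin n, x - a i ∈ Ω₁) ∧
    ∀ u : ℂ, u ∉ Ω₂ → wp Ω₂ u = (∑ i : Fin n, wp Ω₁ (u + a i)) - c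

-- Section A : conjugation basics
lemma mem_conjL {Λ : AddSubgroup ℂ} {x : ℂ} : x ∈ conjL Λ ↔ (starRingEnd ℂ) x ∈ Λ := by
  constructor
  · rintro ⟨y, hy, rfl⟩
    simpa using hy
  · intro h
    exact ⟨(starRingEnd ℂ) x, h, by simp⟩

lemma conjL_inf (A B : AddSubgroup ℂ) : conjL (A ⊓ B) = conjL A ⊓ conjL B := by
  ext x; simp [mem_conjL, AddSubgroup.mem_inf]

-- Section B : lattice data
structure LatticeData (Λ : AddSubgroup ℂ) where
  w1 : ℂ
  w2 : ℂ
  indep : LinearIndependent ℝ ![w1, w2]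
  mem : ∀ x : ℂ, x ∈ Λ ↔ ∃ p q : ℤ, p • w1 + q • w2 = x

lemma IsLattice.nonempty_data {Λ : AddSubgroup ℂ} (h : IsLattice Λ) :
    Nonempty (LatticeData Λ) := by
  obtain ⟨w1, w2, hind, rfl⟩ := h
  refine ⟨⟨w1, w2, hind, fun x => ?_⟩⟩
  rw [← Submodule.span_int_eq_addSubgroupClosure, Submodule.mem_toAddSubgroup,
    Submodule.mem_span_pair]

namespace LatticeData

variable {Λ : AddSubgroup ℂ} (D : LatticeData Λ)

/-- coordinates map -/
def F (pq : ℤ × ℤ) : ℂ := pq.1 • D.w1 + pq.2 • D.w2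

lemma F_inj : Function.Injective D.F := by
  intro ⟨p, q⟩ ⟨p', q'⟩ h
  simp only [F] at h
  have h' : ((p - p' : ℤ) : ℝ) • D.w1 + ((q - q' : ℤ) : ℝ) • D.w2 = 0 := by
    push_cast
    simp only [sub_smul]
    have : (p : ℝ) • D.w1 = (p : ℤ) • D.w1 := by simp
    rw [show (p:ℝ) • D.w1 = (p:ℤ) • D.w1 by simp, show (p':ℝ) • D.w1 = (p':ℤ) • D.w1 by simp,
      show (q:ℝ) • D.w2 = (q:ℤ) • D.w2 by simp, show (q':ℝ) • D.w2 = (q':ℤ) • D.w2 by simp]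
    rw [sub_add_sub_comm, h, sub_self]
  obtain ⟨h1, h2⟩ := D.indep.eq_zero_of_pair h'
  have : p = p' := by exact_mod_cast sub_eq_zero.mp (by exact_mod_cast h1)
  have : q = q' := by exact_mod_cast sub_eq_zero.mp (by exact_mod_cast h2)
  simp_all [Prod.ext_iff]

lemma mem_iff_F {x : ℂ} : x ∈ Λ ↔ ∃ pq : ℤ × ℤ, D.F pq = x := by
  rw [D.mem x]
  constructor
  · rintro ⟨p, q, h⟩; exact ⟨(p, q), h⟩
  · rintro ⟨⟨p, q⟩, h⟩; exact ⟨p, q, h⟩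

lemma norm_bound : ∃ c > 0, ∀ pq : ℤ × ℤ,
    c * max (|pq.1| : ℝ) (|pq.2| : ℝ) ≤ ‖D.F pq‖ := by
  have hcard : Fintype.card (Fin 2) = Module.finrank ℝ ℂ := by
    simp [Complex.finrank_real_complex]
  let b : Module.Basis (Fin 2) ℝ ℂ := basisOfLinearIndependentOfCardEqFinrank D.indep hcard
  have hb : ∀ i, b i = ![D.w1, D.w2] i := fun i => by
    simp [b, coe_basisOfLinearIndependentOfCardEqFinrank]
  obtain ⟨C0, hC0, hC⟩ := (LinearMap.toContinuousLinearMap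
    (b.equivFun : ℂ →ₗ[ℝ] (Fin 2 → ℝ))).isBoundedLinearMap.bound
  refine ⟨1 / C0, by positivity, fun ⟨p, q⟩ => ?_⟩
  have key : b.equivFun (D.F (p, q)) = ![(p : ℝ), (q : ℝ)] := by
    have : D.F (p, q) = (p : ℝ) • b 0 + (q : ℝ) • b 1 := by
      rw [hb 0, hb 1]
      simp [F]
    rw [this, map_add, map_smul, map_smul]
    ext i
    fin_cases i <;> simp [Module.Basis.equivFun_self]
  have h1 : ‖b.equivFun (D.F (p, q))‖ ≤ C0 * ‖D.F (p, q)‖ := hC _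
  have h2 : max (|p| : ℝ) (|q| : ℝ) ≤ ‖b.equivFun (D.F (p, q))‖ := by
    rw [key]
    rw [max_le_iff]
    constructor
    · simpa using norm_le_pi_norm (![(p : ℝ), (q : ℝ)]) 0
    · simpa using norm_le_pi_norm (![(p : ℝ), (q : ℝ)]) 1
  rw [div_mul_eq_mul_div, div_le_iff₀ hC0, one_mul]
  exact (h2.trans h1).trans_eq (mul_comm _ _)

end LatticeData

-- Section C : master summability
open Filter in
lemma LatticeData.summable_decay {Λ : AddSubgroup ℂ} (D : LatticeData Λ)
    (P : ℂ → Prop) (hP : ∀ w, P w → w ∈ Λ) (f : ℂ → ℂ) (C R : ℝ) (hC : 0 ≤ C)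
    (hf : ∀ w : ℂ, R ≤ ‖w‖ → ‖f w‖ ≤ C / ‖w‖ ^ 3) :
    Summable fun ω : {ω : ℂ // P ω} => f ω.1 := by
  classical
  obtain ⟨c, hc, hcb⟩ := D.norm_bound
  set T : (Fin 2 → ℤ) → ℂ := fun x => D.F (x 0, x 1) with hT
  have hTinj : Function.Injective T := by
    intro x y h
    have := D.F_inj h
    funext j
    fin_cases j
    · exact congrArg Prod.fst this
    · exact congrArg Prod.snd this
  set g : (Fin 2 → ℤ) → ℂ := fun x => if P (T x) then f (T x) else 0 with hg
  have hnormx : ∀ x : Fin 2 → ℤ, (max (|x 0| : ℝ) (|x 1| : ℝ)) = ‖x‖ := by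
    intro x
    rw [EisensteinSeries.norm_eq_max_natAbs]
    push_cast [Nat.cast_natAbs]
    rfl
  set M : ℝ := max (R / c) 1 with hM
  have key : ∀ x : Fin 2 → ℤ, M ≤ ‖x‖ → ‖g x‖ ≤ (C / c ^ 3) * ‖x‖ ^ (-(3 : ℝ)) := by
    intro x hx
    have hx1 : (1 : ℝ) ≤ ‖x‖ := le_trans (le_max_right _ _) hx
    have hxpos : (0 : ℝ) < ‖x‖ := lt_of_lt_of_le one_pos hx1
    have hrpow : ‖x‖ ^ (-(3 : ℝ)) = (‖x‖ ^ (3 : ℕ))⁻¹ := by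
      rw [Real.rpow_neg (norm_nonneg _), show ((3:ℝ)) = ((3:ℕ):ℝ) by norm_num,
        Real.rpow_natCast]
    have hpos3 : (0:ℝ) < ‖x‖ ^ (3:ℕ) := by positivity
    by_cases hPx : P (T x)
    · have hTx : c * ‖x‖ ≤ ‖T x‖ := by
        have := hcb (x 0, x 1)
        rwa [hnormx x] at this
      have hRTx : R ≤ ‖T x‖ := by
        have : R ≤ c * ‖x‖ := by
          have : R / c ≤ ‖x‖ := le_trans (le_max_left _ _) hx
          calc R = c * (R / c) := by field_simp
          _ ≤ c * ‖x‖ := by nlinarith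
        linarith
      have h1 : ‖g x‖ ≤ C / ‖T x‖ ^ 3 := by
        rw [hg]; simp only [if_pos hPx]
        exact hf _ hRTx
      have hTxpos : (0:ℝ) < ‖T x‖ := lt_of_lt_of_le (by positivity) hTx
      have h2 : C / ‖T x‖ ^ 3 ≤ C / (c * ‖x‖) ^ 3 := by
        apply div_le_div_of_nonneg_left hC (by positivity)
        gcongr
      calc ‖g x‖ ≤ C / (c * ‖x‖) ^ 3 := h1.trans h2
      _ = (C / c ^ 3) * ‖x‖ ^ (-(3 : ℝ)) := by
          rw [hrpow, mul_pow]
          field_simp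
    · rw [hg]; simp only [if_neg hPx, norm_zero]
      positivity
  have hgsum : Summable g := by
    apply Summable.of_norm_bounded_eventually
      (g := fun x : Fin 2 → ℤ => (C / c ^ 3) * ‖x‖ ^ (-(3 : ℝ)))
      ((EisensteinSeries.summable_one_div_norm_rpow (by norm_num : (2:ℝ) < 3)).mul_left _)
    rw [Filter.eventually_cofinite]
    have hfin : {x : Fin 2 → ℤ | ‖x‖ < M}.Finite := by
      have hsub : {x : Fin 2 → ℤ | ‖x‖ < M} ⊆
          Set.pi Set.univ (fun _ : Fin 2 => Set.Icc (-⌈M⌉) ⌈M⌉) := by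
        intro x hx
        intro j _
        have hj : (|x j| : ℝ) ≤ ‖x‖ := by
          rw [← hnormx x]
          fin_cases j
          · exact le_max_left _ _
          · exact le_max_right _ _
        have : (|x j| : ℝ) < ⌈M⌉ := lt_of_lt_of_le (lt_of_le_of_lt hj hx.out) (Int.le_ceil M)
        have habs : |x j| ≤ ⌈M⌉ := by exact_mod_cast this.le
        rw [abs_le] at habs
        exact ⟨habs.1, habs.2⟩
      exact Set.Finite.subset (Set.Finite.pi fun _ => Set.finite_Icc _ _) hsub
    apply hfin.subset
    intro x hx
    simp only [Set.mem_setOf_eq] at hx ⊢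
    by_contra hcon
    push_neg at hcon
    exact hx (key x hcon)
  -- transfer to the subtype
  have hmem : ∀ ω : {ω : ℂ // P ω}, ∃ pq : ℤ × ℤ, D.F pq = ω.1 :=
    fun ω => (D.mem_iff_F).mp (hP _ ω.2)
  set i : {ω : ℂ // P ω} → (Fin 2 → ℤ) :=
    fun ω => ![(Classical.choose (hmem ω)).1, (Classical.choose (hmem ω)).2] with hi
  have hTi : ∀ ω, T (i ω) = ω.1 := by
    intro ω
    have hspec := Classical.choose_spec (hmem ω)
    rw [hT]
    simp only [hi]
    convert hspec
    all_goals simp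
  have hiinj : Function.Injective i := by
    intro ω ω' h
    apply Subtype.ext
    rw [← hTi ω, ← hTi ω', h]
  have hvanish : ∀ x, x ∉ Set.range i → g x = 0 := by
    intro x hx
    rw [hg]
    simp only
    rw [if_neg]
    intro hPx
    apply hx
    refine ⟨⟨T x, hPx⟩, ?_⟩
    apply hTinj
    rw [hTi]
  have := (hiinj.summable_iff hvanish).mpr hgsum
  apply this.congr
  intro ω
  simp only [Function.comp_apply, hg, hTi ω, if_pos ω.2]

-- Section D : the basic summand and its summability
lemma latA_bound (z : ℂ) : ∀ w : ℂ, 2 * ‖z‖ + 1 ≤ ‖w‖ →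
    ‖1 / (z - w) ^ 2 - 1 / w ^ 2‖ ≤ (12 * ‖z‖ + 1) / ‖w‖ ^ 3 := by
  intro w hw
  have hz0 : (0:ℝ) ≤ ‖z‖ := norm_nonneg _
  have hw1 : (1:ℝ) ≤ ‖w‖ := by linarith
  have hw0 : w ≠ 0 := by
    intro h; rw [h, norm_zero] at hw; linarith
  have hzw : ‖w‖ / 2 ≤ ‖z - w‖ := by
    have h1 : ‖w‖ - ‖z‖ ≤ ‖w - z‖ := norm_sub_norm_le _ _
    rw [norm_sub_rev] at h1
    linarith
  have hzw0 : z - w ≠ 0 := by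
    intro h; rw [h, norm_zero] at hzw; linarith
  have hid : 1 / (z - w) ^ 2 - 1 / w ^ 2 = z * (2 * w - z) / ((z - w) ^ 2 * w ^ 2) := by
    field_simp
    ring
  rw [hid, norm_div, norm_mul, norm_mul, norm_pow, norm_pow]
  have h2wz : ‖2 * w - z‖ ≤ 3 * ‖w‖ := by
    calc ‖2 * w - z‖ ≤ ‖2 * w‖ + ‖z‖ := norm_sub_le _ _
    _ = 2 * ‖w‖ + ‖z‖ := by rw [norm_mul]; norm_num
    _ ≤ 3 * ‖w‖ := by linarith
  have h4 : ‖w‖ ^ 2 / 4 ≤ ‖z - w‖ ^ 2 := by nlinarith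
  have hwpos : (0:ℝ) < ‖w‖ := by linarith
  have hzwpos : (0:ℝ) < ‖z - w‖ := norm_pos_iff.mpr hzw0
  rw [div_le_div_iff₀ (by positivity) (by positivity)]
  have hA : ‖z‖ * ‖2 * w - z‖ ≤ ‖z‖ * (3 * ‖w‖) := mul_le_mul_of_nonneg_left h2wz hz0
  have hA' : ‖z‖ * ‖2 * w - z‖ * ‖w‖ ^ 3 ≤ ‖z‖ * (3 * ‖w‖) * ‖w‖ ^ 3 :=
    mul_le_mul_of_nonneg_right hA (by positivity)
  have hB : ‖w‖ ^ 2 / 4 * ‖w‖ ^ 2 ≤ ‖z - w‖ ^ 2 * ‖w‖ ^ 2 :=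
    mul_le_mul_of_nonneg_right h4 (by positivity)
  have hB' : (12 * ‖z‖ + 1) * (‖w‖ ^ 2 / 4 * ‖w‖ ^ 2) ≤ (12 * ‖z‖ + 1) * (‖z - w‖ ^ 2 * ‖w‖ ^ 2) :=
    mul_le_mul_of_nonneg_left hB (by positivity)
  nlinarith [hA', hB', pow_nonneg (norm_nonneg w) 4, pow_pos hwpos 4]

lemma LatticeData.summable_latA {Λ : AddSubgroup ℂ} (D : LatticeData Λ)
    (P : ℂ → Prop) (hP : ∀ w, P w → w ∈ Λ) (z : ℂ) :
    Summable fun ω : {ω : ℂ // P ω} => (1 / (z - ω.1) ^ 2 - 1 / ω.1 ^ 2) :=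
  D.summable_decay P hP (fun w => 1 / (z - w) ^ 2 - 1 / w ^ 2) (12 * ‖z‖ + 1) (2 * ‖z‖ + 1)
    (by positivity) (latA_bound z)

-- Section E : wp manipulation lemmas
def seL (Λ0 : AddSubgroup ℂ) : Set ℂ := {ω | ω ∈ Λ0 ∧ ω ≠ 0}
def sfL (Λ0 : AddSubgroup ℂ) : Set ℂ := {ω | ω ∈ Λ0}

lemma wp_eq (Λ0 : AddSubgroup ℂ) (u : ℂ) :
    wp Λ0 u = 1 / u ^ 2 + ∑' ω : seL Λ0, (1 / (u - ω.1) ^ 2 - 1 / ω.1 ^ 2) := rfl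

lemma tsum_sf_eq (Λ0 : AddSubgroup ℂ) (g : ℂ → ℂ)
    (hg : Summable fun ω : seL Λ0 => g ω.1) :
    ∑' ω : sfL Λ0, g ω.1 = g 0 + ∑' ω : seL Λ0, g ω.1 := by
  have hset : sfL Λ0 = {(0:ℂ)} ∪ seL Λ0 := by
    ext x
    simp only [sfL, seL, Set.mem_setOf_eq, Set.mem_union, Set.mem_singleton_iff]
    constructor
    · intro hx
      by_cases h : x = 0
      · exact Or.inl h
      · exact Or.inr ⟨hx, h⟩
    · rintro (rfl | ⟨hx, _⟩)
      · exact zero_mem Λ0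
      · exact hx
  rw [hset, Summable.tsum_union_disjoint (f := g) ?hd ?hs hg, tsum_singleton]
  case hd =>
    rw [Set.disjoint_left]
    rintro x rfl hx
    exact hx.2 rfl
  case hs =>
    exact (Set.finite_singleton (0:ℂ)).summable _

lemma summable_A {Λ Λ0 : AddSubgroup ℂ} (D : LatticeData Λ) (h0 : Λ0 ≤ Λ) (u : ℂ) :
    Summable fun ω : seL Λ0 => (1 / (u - ω.1) ^ 2 - 1 / ω.1 ^ 2) :=
  D.summable_latA (fun w => w ∈ Λ0 ∧ w ≠ 0) (fun _ h => h0 h.1) u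

lemma summable_two_point {Λ Λ0 : AddSubgroup ℂ} (D : LatticeData Λ) (h0 : Λ0 ≤ Λ) (u v : ℂ) :
    Summable fun ω : seL Λ0 => (1 / (u - ω.1) ^ 2 - 1 / (v - ω.1) ^ 2) := by
  apply ((summable_A D h0 u).sub (summable_A D h0 v)).congr
  intro ω
  ring

lemma wp_two_point {Λ Λ0 : AddSubgroup ℂ} (D : LatticeData Λ) (h0 : Λ0 ≤ Λ) (u v : ℂ) :
    wp Λ0 u - wp Λ0 v = ∑' ω : sfL Λ0, (1 / (u - ω.1) ^ 2 - 1 / (v - ω.1) ^ 2) := by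
  have hsu := summable_A D h0 u
  have hsv := summable_A D h0 v
  rw [tsum_sf_eq Λ0 (fun w => 1 / (u - w) ^ 2 - 1 / (v - w) ^ 2)
    (summable_two_point D h0 u v)]
  rw [wp_eq, wp_eq]
  have h1 : ∑' ω : seL Λ0, (1 / (u - ω.1) ^ 2 - 1 / (v - ω.1) ^ 2)
      = (∑' ω : seL Λ0, (1 / (u - ω.1) ^ 2 - 1 / ω.1 ^ 2))
        - ∑' ω : seL Λ0, (1 / (v - ω.1) ^ 2 - 1 / ω.1 ^ 2) := by
    rw [← Summable.tsum_sub hsu hsv]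
    apply tsum_congr
    intro ω
    ring
  rw [h1]
  simp only [sub_zero]
  ring

lemma wp_conj (Λ0 : AddSubgroup ℂ) (u : ℂ) :
    (starRingEnd ℂ) (wp Λ0 u) = wp (conjL Λ0) ((starRingEnd ℂ) u) := by
  rw [wp_eq, wp_eq]
  rw [map_add]
  congr 1
  · rw [map_div₀, map_one, map_pow]
  · have hconj : ∀ x : ℂ, Complex.conjCLE x = (starRingEnd ℂ) x := fun x => rfl
    rw [show ((starRingEnd ℂ) (∑' ω : seL Λ0, (1 / (u - ω.1) ^ 2 - 1 / ω.1 ^ 2)))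
        = Complex.conjCLE (∑' ω : seL Λ0, (1 / (u - ω.1) ^ 2 - 1 / ω.1 ^ 2)) from rfl]
    rw [Complex.conjCLE.map_tsum]
    set e : seL Λ0 ≃ seL (conjL Λ0) :=
      { toFun := fun ω => ⟨(starRingEnd ℂ) ω.1, by
          refine ⟨mem_conjL.mpr ?_, ?_⟩
          · simpa using ω.2.1
          · simpa using ω.2.2⟩
        invFun := fun ω => ⟨(starRingEnd ℂ) ω.1, by
          refine ⟨?_, ?_⟩
          · have := mem_conjL.mp ω.2.1
            exact this
          · simpa using ω.2.2⟩
        left_inv := fun ω => by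
          apply Subtype.ext
          simp
        right_inv := fun ω => by
          apply Subtype.ext
          simp } with he
    rw [← e.tsum_eq (fun ω : seL (conjL Λ0) => (1 / ((starRingEnd ℂ) u - ω.1) ^ 2 - 1 / ω.1 ^ 2))]
    apply tsum_congr
    intro ω
    simp only [he, Equiv.coe_fn_mk, hconj]
    simp only [map_sub, map_div₀, map_one, map_pow]

-- Section E2 : periodicity
lemma sum_Icc_tele (h : ℤ → ℂ) (N : ℕ) :
    ∑ n ∈ Finset.Icc (-(N:ℤ)) N, (h (n - 1) - h n) = h (-(N:ℤ) - 1) - h N := by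
  induction N with
  | zero => simp
  | succ N ih =>
      have hsplit : Finset.Icc (-(N+1:ℤ)) (N+1:ℤ) =
          insert (-(N+1:ℤ)) (insert ((N+1:ℤ)) (Finset.Icc (-(N:ℤ)) N)) := by
        ext x
        simp only [Finset.mem_Icc, Finset.mem_insert]
        omega
      have h1 : (-(N+1:ℤ)) ∉ insert ((N+1:ℤ)) (Finset.Icc (-(N:ℤ)) N) := by
        simp only [Finset.mem_insert, Finset.mem_Icc]
        omega
      have h2 : ((N+1:ℤ)) ∉ Finset.Icc (-(N:ℤ)) N := by
        simp only [Finset.mem_Icc]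
        omega
      push_cast
      rw [hsplit, Finset.sum_insert h1, Finset.sum_insert h2, ih]
      have e1 : ((N:ℤ) + 1) - 1 = (N:ℤ) := by ring
      have e2 : (-((N:ℤ)+1)) - 1 = -(N:ℤ) - 1 - 1 := by ring
      have e3 : (-((N:ℤ)+1)) = -(N:ℤ) - 1 := by ring
      rw [e1, e2, e3]
      ring

open Filter Topology in
lemma tendsto_inv_sq_zero (a lam : ℂ) (hlam : lam ≠ 0) (l : Filter ℤ)
    (habs : Tendsto (fun n : ℤ => |(n:ℝ)|) l atTop) :
    Tendsto (fun n : ℤ => 1 / (a - (n:ℂ) * lam) ^ 2) l (𝓝 0) := by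
  have hlampos : (0:ℝ) < ‖lam‖ := norm_pos_iff.mpr hlam
  have hnorm : ∀ n : ℤ, |(n:ℝ)| * ‖lam‖ - ‖a‖ ≤ ‖a - (n:ℂ) * lam‖ := by
    intro n
    have h1 : ‖(n:ℂ) * lam‖ - ‖a‖ ≤ ‖(n:ℂ) * lam - a‖ := norm_sub_norm_le _ _
    rw [norm_sub_rev] at h1
    have h2 : ‖(n:ℂ) * lam‖ = |(n:ℝ)| * ‖lam‖ := by
      rw [norm_mul]
      congr 1
      rw [show ((n:ℂ)) = (((n:ℝ)):ℂ) by push_cast; ring, Complex.norm_real]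
      exact Real.norm_eq_abs _
    linarith [h1, h2.symm.le]
  have hlow : Tendsto (fun n : ℤ => |(n:ℝ)| * ‖lam‖ - ‖a‖) l atTop := by
    apply tendsto_atTop_add_const_right
    exact habs.atTop_mul_const hlampos
  have hN : Tendsto (fun n : ℤ => ‖a - (n:ℂ) * lam‖) l atTop :=
    tendsto_atTop_mono hnorm hlow
  have hN2 : Tendsto (fun n : ℤ => ‖a - (n:ℂ) * lam‖ ^ 2) l atTop := by
    have := hN.atTop_mul_atTop₀ hN
    apply this.congr
    intro n
    ring
  have hinv : Tendsto (fun n : ℤ => (‖a - (n:ℂ) * lam‖ ^ 2)⁻¹) l (𝓝 0) :=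
    hN2.inv_tendsto_atTop
  rw [tendsto_zero_iff_norm_tendsto_zero]
  apply hinv.congr
  intro n
  rw [norm_div, norm_one, norm_pow, one_div]

open Filter Topology in
lemma tsum_tele_zero (h : ℤ → ℂ) (hs : Summable fun n : ℤ => h (n - 1) - h n)
    (ht : Tendsto h atTop (𝓝 0)) (hb : Tendsto h atBot (𝓝 0)) :
    ∑' n : ℤ, (h (n - 1) - h n) = 0 := by
  have hfin : Tendsto (fun N : ℕ => Finset.Icc (-(N:ℤ)) N) atTop atTop := by
    apply tendsto_atTop_finset_of_monotone
    · intro N M hNM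
      apply Finset.Icc_subset_Icc <;> omega
    · intro x
      exact ⟨x.natAbs, by simp only [Finset.mem_Icc]; omega⟩
  have h1 : Tendsto (fun N : ℕ => ∑ n ∈ Finset.Icc (-(N:ℤ)) N, (h (n - 1) - h n))
      atTop (𝓝 (∑' n : ℤ, (h (n - 1) - h n))) := hs.hasSum.comp hfin
  have hA : Tendsto (fun N : ℕ => h (-(N:ℤ) - 1)) atTop (𝓝 0) := by
    apply hb.comp
    apply tendsto_atBot_add_const_right
    exact tendsto_neg_atBot_iff.mpr tendsto_natCast_atTop_atTop
  have hB : Tendsto (fun N : ℕ => h (N:ℤ)) atTop (𝓝 0) := by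
    apply ht.comp
    exact tendsto_natCast_atTop_atTop
  have h2 : Tendsto (fun N : ℕ => ∑ n ∈ Finset.Icc (-(N:ℤ)) N, (h (n - 1) - h n))
      atTop (𝓝 0) := by
    have := hA.sub hB
    rw [sub_zero] at this
    apply this.congr
    intro N
    exact (sum_Icc_tele h N).symm
  exact tendsto_nhds_unique h1 h2

lemma summable_two_point_full {Λ Λ0 : AddSubgroup ℂ} (D : LatticeData Λ) (h0 : Λ0 ≤ Λ)
    (u v : ℂ) :
    Summable fun ω : sfL Λ0 => (1 / (u - ω.1) ^ 2 - 1 / (v - ω.1) ^ 2) := by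
  have h1 := D.summable_latA (fun w => w ∈ Λ0) (fun _ h => h0 h) u
  have h2 := D.summable_latA (fun w => w ∈ Λ0) (fun _ h => h0 h) v
  apply (h1.sub h2).congr
  intro ω
  ring

set_option maxHeartbeats 1000000 in
open Filter Topology in
lemma wp_periodic {Λ Λ0 : AddSubgroup ℂ} (D : LatticeData Λ) (h0 : Λ0 ≤ Λ)
    {lam : ℂ} (hlam : lam ∈ Λ0) (u : ℂ) :
    wp Λ0 (u + lam) = wp Λ0 u := by
  classical
  by_cases hlam0 : lam = 0
  · rw [hlam0, add_zero]
  have key := wp_two_point D h0 (u + lam) u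
  rw [sub_eq_iff_eq_add] at key
  rw [key]
  suffices hz : (∑' ω : sfL Λ0, (1 / (u + lam - ω.1) ^ 2 - 1 / (u - ω.1) ^ 2)) = 0 by
    rw [hz, zero_add]
  set K : AddSubgroup Λ0 := AddSubgroup.closure {(⟨lam, hlam⟩ : Λ0)} with hK
  let E : (Λ0 ⧸ K) × ℤ → sfL Λ0 := fun p =>
    ⟨((p.1.out : Λ0) : ℂ) + p.2 • lam, by
      have h1 : ((p.1.out : Λ0) : ℂ) ∈ Λ0 := SetLike.coe_mem _
      exact add_mem h1 (zsmul_mem hlam p.2)⟩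
  have hEbij : Function.Bijective E := by
    constructor
    · rintro ⟨q, n⟩ ⟨q', n'⟩ hE
      have hcoe : ((q.out : Λ0) : ℂ) + n • lam = ((q'.out : Λ0) : ℂ) + n' • lam :=
        congrArg Subtype.val hE
      have hsub : (q.out - q'.out : Λ0) = (n' - n) • (⟨lam, hlam⟩ : Λ0) := by
        apply Subtype.ext
        push_cast
        rw [sub_smul]
        simp only [zsmul_eq_mul] at hcoe ⊢
        push_cast at hcoe ⊢
        linear_combination hcoe
      have hmem : q.out - q'.out ∈ K :=
        AddSubgroup.mem_closure_singleton.mpr ⟨n' - n, hsub.symm⟩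
      have hqq : q = q' := by
        rw [← QuotientAddGroup.out_eq' q, ← QuotientAddGroup.out_eq' q']
        rw [QuotientAddGroup.eq_iff_sub_mem]
        exact hmem
      have hout : ((q.out : Λ0) : ℂ) = ((q'.out : Λ0) : ℂ) := by rw [hqq]
      have : (n : ℂ) * lam = (n' : ℂ) * lam := by
        simp only [zsmul_eq_mul] at hcoe
        rw [hout] at hcoe
        linear_combination hcoe
      have hnn : n = n' := by
        have := mul_right_cancel₀ hlam0 this
        exact_mod_cast this
      simp only [Prod.mk.injEq]
      exact ⟨hqq, hnn⟩
    · rintro ⟨x, hx⟩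
      set xx : Λ0 := ⟨x, hx⟩ with hxx
      set q : Λ0 ⧸ K := QuotientAddGroup.mk xx with hq
      have hout : (QuotientAddGroup.mk q.out : Λ0 ⧸ K) = QuotientAddGroup.mk xx := by
        rw [QuotientAddGroup.out_eq' q]
      rw [QuotientAddGroup.eq_iff_sub_mem] at hout
      obtain ⟨n, hn⟩ := AddSubgroup.mem_closure_singleton.mp hout
      refine ⟨(q, -n), ?_⟩
      apply Subtype.ext
      have hcoe : ((q.out : Λ0) : ℂ) - x = n • lam := by
        have := congrArg (Subtype.val : Λ0 → ℂ) hn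
        push_cast at this
        simpa using this.symm
      simp only [E]
      simp only [zsmul_eq_mul] at hcoe ⊢
      push_cast at hcoe ⊢
      linear_combination hcoe
  set e := Equiv.ofBijective E hEbij with he
  have hsum0 : Summable fun ω : sfL Λ0 => (1 / (u + lam - ω.1) ^ 2 - 1 / (u - ω.1) ^ 2) :=
    summable_two_point_full D h0 (u + lam) u
  have hsum1 : Summable fun p : (Λ0 ⧸ K) × ℤ =>
      (1 / (u + lam - (E p).1) ^ 2 - 1 / (u - (E p).1) ^ 2) := by
    exact e.summable_iff.mpr hsum0
  have hre : (∑' ω : sfL Λ0, (1 / (u + lam - ω.1) ^ 2 - 1 / (u - ω.1) ^ 2))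
      = ∑' p : (Λ0 ⧸ K) × ℤ, (1 / (u + lam - (E p).1) ^ 2 - 1 / (u - (E p).1) ^ 2) :=
    (e.tsum_eq (fun ω : sfL Λ0 => (1 / (u + lam - ω.1) ^ 2 - 1 / (u - ω.1) ^ 2))).symm
  rw [hre, Summable.tsum_prod' hsum1 (fun b => hsum1.prod_factor b)]
  have hinner : ∀ q : Λ0 ⧸ K,
      (∑' n : ℤ, (1 / (u + lam - (E (q, n)).1) ^ 2 - 1 / (u - (E (q, n)).1) ^ 2)) = 0 := by
    intro q
    set a : ℂ := u - ((q.out : Λ0) : ℂ) with ha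
    set h : ℤ → ℂ := fun n => 1 / (a - (n:ℂ) * lam) ^ 2 with hh
    have hterm : ∀ n : ℤ,
        (1 / (u + lam - (E (q, n)).1) ^ 2 - 1 / (u - (E (q, n)).1) ^ 2) = h (n - 1) - h n := by
      intro n
      have e1 : u + lam - (E (q, n)).1 = a - ((n - 1 : ℤ):ℂ) * lam := by
        simp only [E, ha, zsmul_eq_mul]
        push_cast
        ring
      have e2 : u - (E (q, n)).1 = a - (n:ℂ) * lam := by
        simp only [E, ha, zsmul_eq_mul]
        push_cast
        ring
      rw [e1, e2]
    rw [tsum_congr hterm]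
    apply tsum_tele_zero
    · exact (hsum1.prod_factor q).congr (fun n => hterm n)
    · apply tendsto_inv_sq_zero a lam hlam0
      exact (tendsto_abs_atTop_atTop).comp tendsto_intCast_atTop_atTop
    · apply tendsto_inv_sq_zero a lam hlam0
      have : Tendsto (fun n : ℤ => (n:ℝ)) atBot atBot := by
        rw [tendsto_intCast_atBot_iff]
        exact tendsto_id
      exact (tendsto_abs_atBot_atTop).comp this
  rw [tsum_congr hinner]
  exact tsum_zero

-- Section E3 : the master rearrangement
set_option maxHeartbeats 1000000 in
open scoped Classical in
lemma key_rearrange {Λb Λ0 : AddSubgroup ℂ} (Db : LatticeData Λb) (h0 : Λ0 ≤ Λb)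
    {n : ℕ} (r : Fin n → ℂ)
    (hr1 : ∀ t s, r t - r s ∈ Λ0 → t = s)
    (hr2 : ∀ x : ℂ, x ∈ Λb ↔ ∃ t, x - r t ∈ Λ0)
    (u : ℂ) :
    ∑ t, wp Λ0 (u + r t)
      = wp Λb u + ∑ t ∈ Finset.univ.filter (fun t => r t ∉ Λ0), wp Λ0 (r t) := by
  have hrb : ∀ t, r t ∈ Λb := fun t => (hr2 (r t)).mpr ⟨t, by simpa using zero_mem Λ0⟩
  obtain ⟨t₀, ht₀⟩ : ∃ t, r t ∈ Λ0 := by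
    obtain ⟨t, ht⟩ := (hr2 0).mp (zero_mem Λb)
    refine ⟨t, ?_⟩
    have := neg_mem ht
    simpa using this
  have huniq : ∀ t, r t ∈ Λ0 → t = t₀ := fun t ht => hr1 t t₀ (sub_mem ht ht₀)
  have hfilter : Finset.univ.filter (fun t => r t ∉ Λ0) = Finset.univ.erase t₀ := by
    ext t
    simp only [Finset.mem_filter, Finset.mem_univ, true_and, Finset.mem_erase, and_true]
    constructor
    · intro h ht
      exact h (ht ▸ ht₀)
    · intro h hmem
      exact h (huniq t hmem)
  rw [← Finset.sum_erase_add Finset.univ _ (Finset.mem_univ t₀)]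
  rw [wp_periodic Db h0 ht₀ u]
  have hsplit : ∀ t ∈ Finset.univ.erase t₀,
      wp Λ0 (u + r t) = wp Λ0 (r t)
        + ∑' ω : sfL Λ0, (1 / (u + r t - ω.1) ^ 2 - 1 / (r t - ω.1) ^ 2) := by
    intro t _
    have := wp_two_point Db h0 (u + r t) (r t)
    linear_combination this
  rw [Finset.sum_congr rfl hsplit, Finset.sum_add_distrib, hfilter]
  have hmain : (∑ t ∈ Finset.univ.erase t₀,
      ∑' ω : sfL Λ0, (1 / (u + r t - ω.1) ^ 2 - 1 / (r t - ω.1) ^ 2))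
      = wp Λb u - wp Λ0 u := by
    set A : ℂ → ℂ := fun w => 1 / (u - w) ^ 2 - 1 / w ^ 2 with hA
    set C : Fin n → Set ℂ := fun t => {w : ℂ | w + r t ∈ Λ0} with hC
    have hCt : ∀ t, (∑' ω : sfL Λ0, (1 / (u + r t - ω.1) ^ 2 - 1 / (r t - ω.1) ^ 2))
        = ∑' w : C t, A w.1 := by
      intro t
      have hmemC : ∀ ω : sfL Λ0, (ω.1 - r t) ∈ C t := by
        intro ω
        show ω.1 - r t + r t ∈ Λ0
        simpa using (show ω.1 ∈ Λ0 from ω.2)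
      set eT : sfL Λ0 ≃ C t :=
        { toFun := fun ω => ⟨ω.1 - r t, hmemC ω⟩
          invFun := fun w => ⟨w.1 + r t, w.2⟩
          left_inv := fun ω => by apply Subtype.ext; simp
          right_inv := fun w => by apply Subtype.ext; simp } with heT
      rw [← eT.tsum_eq (fun w : C t => A w.1)]
      apply tsum_congr
      intro ω
      simp only [heT, Equiv.coe_fn_mk, hA]
      rw [show u - (ω.1 - r t) = u + r t - ω.1 by ring,
        show (ω.1 - r t) ^ 2 = (r t - ω.1) ^ 2 by ring]
    have hsum_each : ∀ t ∈ Finset.univ.erase t₀, Summable (A ∘ (↑) : C t → ℂ) := by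
      intro t _
      have hP : ∀ w : ℂ, w + r t ∈ Λ0 → w ∈ Λb := by
        intro w hw
        have := sub_mem (h0 hw) (hrb t)
        simpa using this
      exact Db.summable_latA (fun w => w + r t ∈ Λ0) hP u
    have hdisj : ((Finset.univ.erase t₀ : Finset (Fin n)) : Set (Fin n)).Pairwise
        (Function.onFun Disjoint C) := by
      intro t _ s _ hts
      rw [Function.onFun, Set.disjoint_left]
      intro w hwt hws
      have h1 : w + r t ∈ Λ0 := hwt
      have h2 : w + r s ∈ Λ0 := hws
      exact hts (hr1 t s (by simpa using sub_mem h1 h2))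
    have hunion : (⋃ t ∈ Finset.univ.erase t₀, C t) = {w : ℂ | w ∈ Λb ∧ w ∉ Λ0} := by
      ext w
      simp only [Set.mem_iUnion, Finset.mem_coe, Finset.mem_erase, Finset.mem_univ, and_true,
        Set.mem_setOf_eq, exists_prop]
      constructor
      · rintro ⟨t, ht, hw⟩
        have hw' : w + r t ∈ Λ0 := hw
        constructor
        · have := sub_mem (h0 hw') (hrb t)
          simpa using this
        · intro hwL
          exact ht (huniq t (by simpa using sub_mem hw' hwL))
      · rintro ⟨hwb, hw0⟩
        obtain ⟨t, ht⟩ := (hr2 (-w)).mp (neg_mem hwb)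
        have hw' : w + r t ∈ Λ0 := by
          have := neg_mem ht
          simpa [add_comm] using this
        refine ⟨t, ?_, hw'⟩
        intro hteq
        apply hw0
        have := sub_mem hw' (hteq ▸ ht₀)
        simpa using this
    rw [Finset.sum_congr rfl (fun t _ => hCt t)]
    rw [← Summable.tsum_finset_bUnion_disjoint hdisj hsum_each, hunion]
    -- step 1
    have hseb : seL Λb = seL Λ0 ∪ {w : ℂ | w ∈ Λb ∧ w ∉ Λ0} := by
      ext w
      simp only [seL, Set.mem_setOf_eq, Set.mem_union]
      constructor
      · rintro ⟨hwb, hw0⟩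
        by_cases h : w ∈ Λ0
        · exact Or.inl ⟨h, hw0⟩
        · exact Or.inr ⟨hwb, h⟩
      · rintro (⟨hw, hw0⟩ | ⟨hwb, hwn⟩)
        · exact ⟨h0 hw, hw0⟩
        · refine ⟨hwb, ?_⟩
          intro h
          exact hwn (h ▸ zero_mem Λ0)
    have hdisj2 : Disjoint (seL Λ0) {w : ℂ | w ∈ Λb ∧ w ∉ Λ0} := by
      rw [Set.disjoint_left]
      rintro w ⟨hw, _⟩ ⟨_, hwn⟩
      exact hwn hw
    have hs1 : Summable (A ∘ (↑) : seL Λ0 → ℂ) :=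
      Db.summable_latA (fun w => w ∈ Λ0 ∧ w ≠ 0) (fun _ h => h0 h.1) u
    have hs2 : Summable (A ∘ (↑) : {w : ℂ | w ∈ Λb ∧ w ∉ Λ0} → ℂ) := by
      apply Db.summable_latA (fun w => w ∈ Λb ∧ w ∉ Λ0) (fun _ h => h.1) u
    have hstep1 : (∑' w : seL Λb, A w.1)
        = (∑' w : seL Λ0, A w.1) + ∑' w : {w : ℂ | w ∈ Λb ∧ w ∉ Λ0}, A w.1 := by
      rw [hseb]
      exact Summable.tsum_union_disjoint hdisj2 hs1 hs2
    rw [wp_eq, wp_eq]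
    have hwpb : (∑' ω : seL Λb, (1 / (u - ω.1) ^ 2 - 1 / ω.1 ^ 2)) = ∑' w : seL Λb, A w.1 := rfl
    have hwp0 : (∑' ω : seL Λ0, (1 / (u - ω.1) ^ 2 - 1 / ω.1 ^ 2)) = ∑' w : seL Λ0, A w.1 := rfl
    rw [hwpb, hwp0, hstep1]
    ring
  linear_combination hmain

-- Section F : construction of representatives and assembly
lemma exists_not_mem {Λ : AddSubgroup ℂ} (D : LatticeData Λ) : ∃ u : ℂ, u ∉ Λ := by
  by_contra h
  push_neg at h
  have huniv : (Set.univ : Set ℂ).Countable := by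
    have hsub : (Set.univ : Set ℂ) ⊆ Set.range D.F := by
      intro x _
      obtain ⟨pq, hpq⟩ := (D.mem_iff_F).mp (h x)
      exact ⟨pq, hpq⟩
    exact (Set.countable_range D.F).mono hsub
  have : Uncountable ℂ := Complex.ofReal_injective.uncountable
  exact Set.not_countable_univ huniv

lemma reps_exist {ΛA ΛB : AddSubgroup ℂ} (hle : ΛB ≤ ΛA)
    {m : ℕ} (g : {x : ℂ // x ∈ ΛA} → Fin m)
    (hg : ∀ x y, g x = g y → (x.1 - y.1 : ℂ) ∈ ΛB) :
    ∃ (nn : ℕ) (r : Fin nn → ℂ),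
      (∀ t s, r t - r s ∈ ΛB → t = s) ∧ (∀ x : ℂ, x ∈ ΛA ↔ ∃ t, x - r t ∈ ΛB) := by
  classical
  set H : AddSubgroup ΛA := ΛB.addSubgroupOf ΛA with hH
  have hmemH : ∀ z : ΛA, z ∈ H ↔ (z : ℂ) ∈ ΛB := fun z => AddSubgroup.mem_addSubgroupOf
  have hfinQ : Finite (ΛA ⧸ H) := by
    apply Finite.of_injective (fun q : ΛA ⧸ H => g q.out)
    intro q q' hqq
    have hmem : (q.out.1 - q'.out.1 : ℂ) ∈ ΛB := hg _ _ hqq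
    rw [← QuotientAddGroup.out_eq' q, ← QuotientAddGroup.out_eq' q',
      QuotientAddGroup.eq_iff_sub_mem]
    rw [hmemH]
    exact_mod_cast hmem
  obtain ⟨nn, ⟨e⟩⟩ := Finite.exists_equiv_fin (ΛA ⧸ H)
  refine ⟨nn, fun t => ((e.symm t).out : ℂ), ?_, ?_⟩
  · intro t s hts
    have hmem : ((e.symm t).out - (e.symm s).out : ΛA) ∈ H := by
      rw [hmemH]
      exact_mod_cast hts
    have : e.symm t = e.symm s := by
      rw [← QuotientAddGroup.out_eq' (e.symm t), ← QuotientAddGroup.out_eq' (e.symm s),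
        QuotientAddGroup.eq_iff_sub_mem]
      exact hmem
    exact e.symm.injective this
  · intro x
    constructor
    · intro hx
      set q : ΛA ⧸ H := QuotientAddGroup.mk (⟨x, hx⟩ : ΛA) with hq
      refine ⟨e q, ?_⟩
      have hout : (QuotientAddGroup.mk q.out : ΛA ⧸ H) = QuotientAddGroup.mk (⟨x, hx⟩ : ΛA) := by
        rw [QuotientAddGroup.out_eq' q]
      rw [QuotientAddGroup.eq_iff_sub_mem, hmemH] at hout
      show x - ((e.symm (e q)).out : ℂ) ∈ ΛB
      rw [e.symm_apply_apply]
      have := neg_mem hout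
      simpa using this
    · rintro ⟨t, ht⟩
      have hrt : ((e.symm t).out : ℂ) ∈ ΛA := SetLike.coe_mem _
      have := add_mem (hle ht) hrt
      simpa using this

/-- Uniqueness half: two coset-representative families give the same `wp`-sums. -/
lemma sum_reps_eq {Λ Λ0 Ωb : AddSubgroup ℂ} (D : LatticeData Λ) (h0 : Λ0 ≤ Λ)
    {ι κ : Type*} [Fintype ι] [Fintype κ] (s : ι → ℂ) (s' : κ → ℂ)
    (hs1 : ∀ i j, s i - s j ∈ Λ0 → i = j)
    (hs2 : ∀ x : ℂ, x ∈ Ωb ↔ ∃ i, x - s i ∈ Λ0)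
    (hs'1 : ∀ p q, s' p - s' q ∈ Λ0 → p = q)
    (hs'2 : ∀ x : ℂ, x ∈ Ωb ↔ ∃ p, x - s' p ∈ Λ0)
    (w : ℂ) :
    ∑ p : κ, wp Λ0 (w + s' p) = ∑ i : ι, wp Λ0 (w + s i) := by
  classical
  have hsΩ : ∀ i, s i ∈ Ωb := fun i => (hs2 (s i)).mpr ⟨i, by simpa using zero_mem Λ0⟩
  have hs'Ω : ∀ p, s' p ∈ Ωb := fun p => (hs'2 (s' p)).mpr ⟨p, by simpa using zero_mem Λ0⟩
  have hσ : ∀ p : κ, ∃ i : ι, s' p - s i ∈ Λ0 := fun p => (hs2 (s' p)).mp (hs'Ω p)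
  have hτ : ∀ i : ι, ∃ p : κ, s i - s' p ∈ Λ0 := fun i => (hs'2 (s i)).mp (hsΩ i)
  set σ : κ → ι := fun p => Classical.choose (hσ p) with hσdef
  have hσspec : ∀ p, s' p - s (σ p) ∈ Λ0 := fun p => Classical.choose_spec (hσ p)
  set τ : ι → κ := fun i => Classical.choose (hτ i) with hτdef
  have hτspec : ∀ i, s i - s' (τ i) ∈ Λ0 := fun i => Classical.choose_spec (hτ i)
  have hσinj : Function.Injective σ := by
    intro p q hpq
    apply hs'1
    have h1 := hσspec p
    have h2 := hσspec q
    rw [hpq] at h1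
    simpa using sub_mem h1 h2
  have hτinj : Function.Injective τ := by
    intro i j hij
    apply hs1
    have h1 := hτspec i
    have h2 := hτspec j
    rw [hij] at h1
    simpa using sub_mem h1 h2
  have hcard : Fintype.card κ = Fintype.card ι :=
    le_antisymm (Fintype.card_le_of_injective σ hσinj) (Fintype.card_le_of_injective τ hτinj)
  have hσbij : Function.Bijective σ :=
    (Fintype.bijective_iff_injective_and_card σ).mpr ⟨hσinj, hcard⟩
  rw [← Function.Bijective.sum_comp hσbij (fun i => wp Λ0 (w + s i))]
  apply Finset.sum_congr rfl
  intro p _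
  have hlam : s' p - s (σ p) ∈ Λ0 := hσspec p
  have := wp_periodic D h0 hlam (w + s (σ p))
  rw [show w + s (σ p) + (s' p - s (σ p)) = w + s' p by ring] at this
  rw [this]

set_option maxHeartbeats 2000000 in
/-- for conjugation-invariant lattices `Ω, Ω'` with a common sublattice `Ω''`,
the generalized residue `𝔠(Ω,Ω') = 𝔠(Ω,Ω'') − ([Ω:Ω'']/[Ω':Ω''])·𝔠(Ω',Ω'')` is real. -/
theorem generalized_residue_real (Ω Ω' Ω'' : AddSubgroup ℂ)
    (hΩ : IsLattice Ω) (hΩ' : IsLattice Ω') (hΩ'' : IsLattice Ω'')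
    (hle : Ω'' ≤ Ω) (hle' : Ω'' ≤ Ω')
    (hinv : conjL Ω = Ω) (hinv' : conjL Ω' = Ω')
    (m k : ℕ) (c c' : ℂ)
    (hres : IsResidueWith Ω Ω'' m c) (hres' : IsResidueWith Ω' Ω'' k c') :
    (c - ((m : ℂ) / (k : ℂ)) * c').im = 0 := by
  classical
  obtain ⟨a, ha1, ha2, ha3⟩ := hres
  obtain ⟨b, hb1, hb2, hb3⟩ := hres'
  obtain ⟨DΩ⟩ := hΩ.nonempty_data
  obtain ⟨DΩ'⟩ := hΩ'.nonempty_data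
  obtain ⟨DΩ''⟩ := hΩ''.nonempty_data
  have hk0 : k ≠ 0 := by
    intro hk
    subst hk
    obtain ⟨j, _⟩ := (hb2 0).mp (zero_mem Ω')
    exact Fin.elim0 j
  have hconjmem : ∀ {x : ℂ}, x ∈ Ω → (starRingEnd ℂ) x ∈ Ω := by
    intro x hx
    rw [← hinv]
    rw [mem_conjL]
    simpa using hx
  have hconjmem' : ∀ {x : ℂ}, x ∈ Ω' → (starRingEnd ℂ) x ∈ Ω' := by
    intro x hx
    rw [← hinv']
    rw [mem_conjL]
    simpa using hx
  set Ω₀ : AddSubgroup ℂ := Ω'' ⊓ conjL Ω'' with hΩ₀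
  have hΩ₀le'' : Ω₀ ≤ Ω'' := inf_le_left
  have h0Ω : Ω₀ ≤ Ω := le_trans hΩ₀le'' hle
  have h0Ω' : Ω₀ ≤ Ω' := le_trans hΩ₀le'' hle'
  have hconjΩ₀ : ∀ x : ℂ, x ∈ Ω₀ ↔ (starRingEnd ℂ) x ∈ Ω₀ := by
    intro x
    simp only [hΩ₀, AddSubgroup.mem_inf, mem_conjL, Complex.conj_conj]
    tauto
  have hconjL0 : conjL Ω₀ = Ω₀ := by
    ext x
    rw [mem_conjL]
    exact (hconjΩ₀ x).symm
  -- construct representatives of Ω₀ in Ω''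
  have hgex : ∀ x : {x : ℂ // x ∈ Ω''}, ∃ i : Fin m, (starRingEnd ℂ) x.1 - a i ∈ Ω'' :=
    fun x => (ha2 _).mp (hconjmem (hle x.2))
  set g : {x : ℂ // x ∈ Ω''} → Fin m := fun x => Classical.choose (hgex x) with hgdef
  have hg : ∀ x y, g x = g y → (x.1 - y.1 : ℂ) ∈ Ω₀ := by
    intro x y hxy
    have h1 : (starRingEnd ℂ) x.1 - a (g x) ∈ Ω'' := Classical.choose_spec (hgex x)
    have h2 : (starRingEnd ℂ) y.1 - a (g y) ∈ Ω'' := Classical.choose_spec (hgex y)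
    rw [hxy] at h1
    have h3 : (starRingEnd ℂ) (x.1 - y.1) ∈ Ω'' := by
      have := sub_mem h1 h2
      rw [map_sub]
      simpa using this
    exact AddSubgroup.mem_inf.mpr ⟨sub_mem x.2 y.2, mem_conjL.mpr h3⟩
  obtain ⟨nn, r, hr1, hr2⟩ := reps_exist hΩ₀le'' g hg
  set γ : ℂ := ∑ t ∈ Finset.univ.filter (fun t => r t ∉ Ω₀), wp Ω₀ (r t) with hγ
  have hkey : ∀ u : ℂ, ∑ t, wp Ω₀ (u + r t) = wp Ω'' u + γ :=
    fun u => key_rearrange DΩ'' hΩ₀le'' r hr1 hr2 u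
  have hrΩ'' : ∀ t, r t ∈ Ω'' := fun t => (hr2 (r t)).mpr ⟨t, by simpa using zero_mem Ω₀⟩
  -- generic processing for one invariant over-lattice
  have main : ∀ (Λ : AddSubgroup ℂ) (DΛ : LatticeData Λ) (hleΛ : Ω'' ≤ Λ)
      (hinvΛ : conjL Λ = Λ) (M : ℕ) (C : ℂ) (aa : Fin M → ℂ)
      (haa1 : ∀ i j, aa i - aa j ∈ Ω'' → i = j)
      (haa2 : ∀ x : ℂ, x ∈ Λ ↔ ∃ i, x - aa i ∈ Ω'')
      (haa3 : ∀ u : ℂ, u ∉ Λ → wp Λ u = (∑ i, wp Ω'' (u + aa i)) - C),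
      ((starRingEnd ℂ)) (C + M * γ) = C + M * γ := by
    intro Λ DΛ hleΛ hinvΛ M C aa haa1 haa2 haa3
    have hconjmemΛ : ∀ {x : ℂ}, x ∈ Λ → (starRingEnd ℂ) x ∈ Λ := by
      intro x hx
      rw [← hinvΛ, mem_conjL]
      simpa using hx
    have h0Λ : Ω₀ ≤ Λ := le_trans hΩ₀le'' hleΛ
    have haaΛ : ∀ i, aa i ∈ Λ := fun i => (haa2 (aa i)).mpr ⟨i, by simpa using zero_mem Ω''⟩
    set s : Fin M × Fin nn → ℂ := fun p => aa p.1 + r p.2 with hsdef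
    have hs1 : ∀ p q, s p - s q ∈ Ω₀ → p = q := by
      rintro ⟨i, t⟩ ⟨j, u'⟩ hpq
      have h1 : (aa i - aa j) + (r t - r u') ∈ Ω₀ := by
        have : s (i, t) - s (j, u') = (aa i - aa j) + (r t - r u') := by simp [hsdef]; ring
        rwa [this] at hpq
      have hij : i = j := by
        apply haa1
        have h2 : r t - r u' ∈ Ω'' := sub_mem (hrΩ'' t) (hrΩ'' u')
        have := sub_mem (hΩ₀le'' h1) h2
        simpa using this
      subst hij
      have htu : r t - r u' ∈ Ω₀ := by simpa using h1
      have := hr1 t u' htu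
      simp [this]
    have hs2 : ∀ x : ℂ, x ∈ Λ ↔ ∃ p, x - s p ∈ Ω₀ := by
      intro x
      constructor
      · intro hx
        obtain ⟨i, hi⟩ := (haa2 x).mp hx
        obtain ⟨t, ht⟩ := (hr2 (x - aa i)).mp hi
        exact ⟨(i, t), by simpa [hsdef, sub_sub] using ht⟩
      · rintro ⟨⟨i, t⟩, hp⟩
        have h1 : x - s (i, t) ∈ Λ := h0Λ hp
        have h2 : s (i, t) ∈ Λ := add_mem (haaΛ i) (hleΛ (hrΩ'' t))
        have := add_mem h1 h2
        simpa using this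
    have hsid : ∀ u : ℂ, u ∉ Λ →
        wp Λ u = (∑ p : Fin M × Fin nn, wp Ω₀ (u + s p)) - (C + M * γ) := by
      intro u hu
      have h1 := haa3 u hu
      have h2 : ∑ p : Fin M × Fin nn, wp Ω₀ (u + s p)
          = ∑ i, ∑ t, wp Ω₀ ((u + aa i) + r t) := by
        rw [Fintype.sum_prod_type]
        apply Finset.sum_congr rfl
        intro i _
        apply Finset.sum_congr rfl
        intro t _
        congr 1
        simp [hsdef]
        ring
      have h3 : ∑ i, ∑ t, wp Ω₀ ((u + aa i) + r t) = ∑ i, (wp Ω'' (u + aa i) + γ) :=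
        Finset.sum_congr rfl (fun i _ => hkey (u + aa i))
      have h4 : ∑ i, (wp Ω'' (u + aa i) + γ) = (∑ i, wp Ω'' (u + aa i)) + M * γ := by
        rw [Finset.sum_add_distrib, Finset.sum_const, Finset.card_univ, Fintype.card_fin,
          nsmul_eq_mul]
      rw [h2, h3, h4, h1]
      ring
    set s' : Fin M × Fin nn → ℂ := fun p => (starRingEnd ℂ) (s p) with hs'def
    have hs'1 : ∀ p q, s' p - s' q ∈ Ω₀ → p = q := by
      intro p q hpq
      apply hs1
      rw [hconjΩ₀]
      rw [map_sub]
      simpa [hs'def] using hpq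
    have hs'2 : ∀ x : ℂ, x ∈ Λ ↔ ∃ p, x - s' p ∈ Ω₀ := by
      intro x
      constructor
      · intro hx
        obtain ⟨p, hp⟩ := (hs2 ((starRingEnd ℂ) x)).mp (hconjmemΛ hx)
        refine ⟨p, ?_⟩
        rw [hconjΩ₀]
        rw [map_sub]
        simpa [hs'def] using hp
      · rintro ⟨p, hp⟩
        have h1 : (starRingEnd ℂ) x - s p ∈ Ω₀ := by
          rw [hconjΩ₀] at hp
          rw [map_sub] at hp
          simpa [hs'def] using hp
        have h2 : (starRingEnd ℂ) x ∈ Λ := (hs2 _).mpr ⟨p, h1⟩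
        have := hconjmemΛ h2
        simpa using this
    obtain ⟨u₀, hu₀⟩ := exists_not_mem DΛ
    have hu₀c : (starRingEnd ℂ) u₀ ∉ Λ := by
      intro h
      apply hu₀
      have := hconjmemΛ h
      simpa using this
    have h1 := hsid u₀ hu₀
    have h2 := hsid ((starRingEnd ℂ) u₀) hu₀c
    have h2c := congrArg (starRingEnd ℂ) h2
    rw [wp_conj, hinvΛ, Complex.conj_conj, map_sub, map_sum] at h2c
    have h2term : ∀ p, (starRingEnd ℂ) (wp Ω₀ ((starRingEnd ℂ) u₀ + s p))
        = wp Ω₀ (u₀ + s' p) := by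
      intro p
      rw [wp_conj, hconjL0, map_add, Complex.conj_conj]
    rw [Finset.sum_congr rfl (fun p _ => h2term p)] at h2c
    have hsums := sum_reps_eq (Ωb := Λ) DΛ h0Λ s s' hs1 hs2 hs'1 hs'2 u₀
    rw [hsums] at h2c
    rw [h1] at h2c
    linear_combination h2c
  have hC := main Ω DΩ hle hinv m c a ha1 ha2 ha3
  have hC' := main Ω' DΩ' hle' hinv' k c' b hb1 hb2 hb3
  have hCim : (c + m * γ).im = 0 := Complex.conj_eq_iff_im.mp hC
  have hC'im : (c' + k * γ).im = 0 := Complex.conj_eq_iff_im.mp hC'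
  have hkC : (k : ℂ) ≠ 0 := Nat.cast_ne_zero.mpr hk0
  have hsplit : c - ((m : ℂ) / (k : ℂ)) * c'
      = (c + m * γ) - ((m : ℂ) / (k : ℂ)) * (c' + k * γ) := by
    field_simp
    ring
  rw [hsplit]
  have hreal : ((m : ℂ) / (k : ℂ)) = ((((m : ℝ) / (k : ℝ)) : ℝ) : ℂ) := by
    push_cast
    ring
  rw [hreal, Complex.sub_im]
  simp [Complex.mul_im, hCim, hC'im]
end
end
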